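/- arXiv:2210.01793 — 6 statements merged into one kernel-verified Lean document; each statement's English description precedes it below -/
import Mathlib

section
/- For an integer n ≥ 2 and integers k_1, …, k_n ≥ 3, the number of spanning trees of the hinge graph H_{k_1−1,…,k_n−1} equals ∏_{i=1}^n (k_i−1) + ∑_{i=1}^n ∏_{j≠i} (k_j−1). -/
/-- Vertex set of the hinge graph `H_{k₁-1,…,kₙ-1}` with base cycles of lengths `k i`:
two shared vertices `u, w` (encoded as `Sum.inl 0`, `Sum.inl 1`) together with the vertices
`v_{i,j}` (encoded as `Sum.inr ⟨i, j⟩`, zero-indexed, `j < k i - 2`). -/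
abbrev GHingeVertex (n : ℕ) (k : Fin n → ℕ) : Type := Fin 2 ⊕ (Σ i : Fin n, Fin (k i - 2))

/-- The shared vertex `u`. -/
def gu (n : ℕ) (k : Fin n → ℕ) : GHingeVertex n k := Sum.inl 0

/-- The shared vertex `w`. -/
def gw (n : ℕ) (k : Fin n → ℕ) : GHingeVertex n k := Sum.inl 1

/-- The vertex `v_{i+1,j+1}` of the `i+1`-st cycle (zero-indexed here). -/
def gv (n : ℕ) (k : Fin n → ℕ) (i : Fin n) (j : Fin (k i - 2)) : GHingeVertex n k :=
  Sum.inr ⟨i, j⟩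

/-- The base (Boolean) edge relation of the hinge graph: `u-w`, `u-v_{i,1}`,
`v_{i,j}-v_{i,j+1}`, `v_{i,k_i-2}-w`. -/
def gHingeRelB (n : ℕ) (k : Fin n → ℕ) : GHingeVertex n k → GHingeVertex n k → Bool
  | Sum.inl a, Sum.inl b => a != b
  | Sum.inl a, Sum.inr p => a == 0 && p.2.val == 0
  | Sum.inr p, Sum.inl b => b == 1 && p.2.val == k p.1 - 3
  | Sum.inr p, Sum.inr q => p.1 == q.1 && q.2.val == p.2.val + 1

/-- The hinge graph `H_{k₁-1,…,kₙ-1}`: cycles of lengths `k 1, …, k n` glued along the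
common edge `{u, w}`. -/
def GHinge (n : ℕ) (k : Fin n → ℕ) : SimpleGraph (GHingeVertex n k) :=
  SimpleGraph.fromRel (fun x y => gHingeRelB n k x y = true)

instance (n : ℕ) (k : Fin n → ℕ) : DecidableRel (GHinge n k).Adj := fun x y =>
  inferInstanceAs (Decidable (x ≠ y ∧ (gHingeRelB n k x y = true ∨ gHingeRelB n k y x = true)))

/-- The number of spanning trees of a graph `G`: the number of edge sets `s ⊆ E(G)`
whose associated spanning subgraph (on all of `V`) is connected and acyclic. -/
noncomputable def spanningTreeCount {V : Type*} (G : SimpleGraph V) : ℕ :=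
  Set.ncard {s : Set (Sym2 V) | s ⊆ G.edgeSet ∧ (SimpleGraph.fromEdgeSet s).IsTree}

/-- The degree homomorphism on divisors. -/
def degHom (V : Type*) [Fintype V] : (V → ℤ) →+ ℤ where
  toFun D := ∑ v, D v
  map_zero' := by simp
  map_add' x y := by simp [Finset.sum_add_distrib]

/-- The group `Div⁰` of degree-zero divisors. -/
def Div0 (V : Type*) [Fintype V] : AddSubgroup (V → ℤ) := (degHom V).ker

/-- The group of principal divisors: the image of the Laplacian `L = Deg - A`. -/
def Prin {V : Type*} [Fintype V] [DecidableEq V] (G : SimpleGraph V) [DecidableRel G.Adj] :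
    AddSubgroup (V → ℤ) :=
  AddMonoidHom.range (Matrix.mulVecLin (G.lapMatrix ℤ)).toAddMonoidHom

/-- The critical group `K(G) = Div⁰(G) / Prin(G)`. -/
def CriticalGroup {V : Type*} [Fintype V] [DecidableEq V] (G : SimpleGraph V)
    [DecidableRel G.Adj] : Type _ :=
  Div0 V ⧸ ((Prin G).addSubgroupOf (Div0 V))

noncomputable instance {V : Type*} [Fintype V] [DecidableEq V] (G : SimpleGraph V)
    [DecidableRel G.Adj] : AddCommGroup (CriticalGroup G) :=
  inferInstanceAs (AddCommGroup (Div0 V ⧸ ((Prin G).addSubgroupOf (Div0 V))))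

/-- The class of a degree-zero divisor in the critical group. -/
def divisorClass {V : Type*} [Fintype V] [DecidableEq V] (G : SimpleGraph V)
    [DecidableRel G.Adj] (D : V → ℤ) (hD : D ∈ Div0 V) : CriticalGroup G :=
  (QuotientAddGroup.mk (⟨D, hD⟩ : Div0 V) :
    Div0 V ⧸ ((Prin G).addSubgroupOf (Div0 V)))

/-- The divisor with value `1` at `x`, `-1` at `y` (for `x ≠ y`) and `0` elsewhere. -/
def pointDiff {V : Type*} [DecidableEq V] (x y : V) : V → ℤ :=
  fun z => (if z = x then 1 else 0) - (if z = y then 1 else 0)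

lemma pointDiff_mem {V : Type*} [Fintype V] [DecidableEq V] (x y : V) :
    pointDiff x y ∈ Div0 V := by
  simp [Div0, AddMonoidHom.mem_ker, degHom, pointDiff, Finset.sum_sub_distrib]

open SimpleGraph

variable {V0 : Type*}

lemma reach_del {G : SimpleGraph V0} {e : Sym2 V0} {v w : V0} (he : e = s(v,w))
    (hvw : (G \ fromEdgeSet {e}).Reachable v w) {x y : V0} (p : G.Walk x y) :
    (G \ fromEdgeSet {e}).Reachable x y := by
  induction p with
  | nil => exact Reachable.refl _
  | cons h q ih =>
    rename_i a b c
    refine Reachable.trans ?_ ih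
    by_cases hab : s(a,b) = e
    · rw [he] at hab
      rw [Sym2.eq_iff] at hab
      rcases hab with ⟨rfl, rfl⟩ | ⟨rfl, rfl⟩
      · exact hvw
      · exact hvw.symm
    · exact Adj.reachable (by simp [sdiff_adj, h, fromEdgeSet_adj, hab])

lemma isTree_of_connected_of_card [Fintype V0] :
    ∀ (m : ℕ) (G : SimpleGraph V0), G.edgeSet.ncard = m → G.Connected →
      m + 1 ≤ Fintype.card V0 → G.IsTree := by
  intro m
  induction m using Nat.strong_induction_on with
  | _ m IH =>
    intro G hm hc hle
    classical
    by_cases hac : G.IsAcyclic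
    · exact ⟨hc, hac⟩
    exfalso
    simp only [IsAcyclic, not_forall, not_not] at hac
    obtain ⟨u, c, hcyc⟩ := hac
    have hne : c.edges ≠ [] := by
      intro h
      cases c with
      | nil => exact hcyc.ne_nil rfl
      | cons h' q => simp [Walk.edges_cons] at h
    obtain ⟨e, he⟩ := List.exists_mem_of_ne_nil _ hne
    induction e using Sym2.ind with
    | _ v w =>
    have hadj : G.Adj v w := Walk.adj_of_mem_edges c he
    have hreach : (G \ fromEdgeSet {s(v,w)}).Reachable v w :=
      (adj_and_reachable_delete_edges_iff_exists_cycle.mpr ⟨u, c, hcyc, he⟩).2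
    set G' := G \ fromEdgeSet {s(v,w)} with hG'
    have hedge : G'.edgeSet = G.edgeSet \ {s(v,w)} := by
      rw [hG', edgeSet_sdiff, edgeSet_fromEdgeSet]
      ext f
      simp only [Set.mem_diff, Set.mem_singleton_iff, Set.mem_setOf_eq]
      constructor
      · rintro ⟨h1, h2⟩
        refine ⟨h1, fun hf => h2 ⟨hf, ?_⟩⟩
        subst hf; simpa using hadj.ne
      · rintro ⟨h1, h2⟩
        exact ⟨h1, fun hf => h2 hf.1⟩
    have hmem : s(v,w) ∈ G.edgeSet := hadj
    have hfin : G.edgeSet.Finite := Set.toFinite _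
    have hcard' : G'.edgeSet.ncard = m - 1 := by
      rw [hedge, Set.ncard_diff_singleton_of_mem hmem, hm]
    have hmpos : 0 < m := by
      rw [← hm]
      exact (Set.ncard_pos hfin).mpr ⟨_, hmem⟩
    have hc' : G'.Connected := by
      have hne' : Nonempty V0 := hc.nonempty
      refine Connected.mk fun x y => ?_
      obtain ⟨p⟩ := hc.preconnected x y
      exact reach_del rfl hreach p
    have htree := IH (m-1) (by omega) G' hcard' hc' (by omega)
    have := htree.card_edgeFinset
    rw [← Set.ncard_coe_finset, coe_edgeFinset] at this
    omega

section Hinge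
variable (n : ℕ) (k : Fin n → ℕ)

abbrev EIdx := Option (Σ i : Fin n, Fin (k i - 1))

def pv (i : Fin n) (t : ℕ) : GHingeVertex n k :=
  if h : 0 < t ∧ t < k i - 1 then gv n k i ⟨t - 1, by omega⟩
  else if t = 0 then gu n k else gw n k

def Emap : EIdx n k → Sym2 (GHingeVertex n k)
  | none => s(gu n k, gw n k)
  | some ⟨i, j⟩ => s(pv n k i j.val, pv n k i (j.val + 1))

variable {n k} (hk : ∀ i, 3 ≤ k i)
include hk

omit hk in
lemma pv_zero (i : Fin n) : pv n k i 0 = gu n k := by simp [pv]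

lemma pv_last (i : Fin n) : pv n k i (k i - 1) = gw n k := by
  have h3 := hk i
  simp only [pv]
  rw [dif_neg (by omega), if_neg (by omega)]

omit hk in
lemma pv_mid (i : Fin n) (t : ℕ) (h1 : 0 < t) (h2 : t < k i - 1) :
    pv n k i t = (Sum.inr ⟨i, ⟨t - 1, by omega⟩⟩ : GHingeVertex n k) := by
  unfold pv
  rw [dif_pos (show 0 < t ∧ t < k i - 1 from ⟨h1, h2⟩)]
  rfl

lemma pv_eq_pv_iff {i i' : Fin n} {t t' : ℕ} (ht : t ≤ k i - 1) (ht' : t' ≤ k i' - 1) :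
    pv n k i t = pv n k i' t' ↔
      ((t = 0 ∧ t' = 0) ∨ (t = k i - 1 ∧ t' = k i' - 1) ∨ (i = i' ∧ t = t' ∧ 0 < t ∧ t < k i - 1)) := by
  have h3 := hk i
  have h3' := hk i'
  constructor
  · intro h
    rcases Nat.lt_or_ge 0 t with h1 | h1
    · rcases Nat.lt_or_ge t (k i - 1) with h2 | h2
      · -- t middle
        rw [pv_mid i t h1 h2] at h
        rcases Nat.lt_or_ge 0 t' with h1' | h1'
        · rcases Nat.lt_or_ge t' (k i' - 1) with h2' | h2'
          · rw [pv_mid i' t' h1' h2'] at h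
            obtain ⟨hii, hjj⟩ := Sigma.mk.inj_iff.mp (Sum.inr.inj h)
            subst hii
            have hteq : t - 1 = t' - 1 := by simpa using eq_of_heq hjj
            right; right; exact ⟨rfl, by omega, h1, h2⟩
          · rw [show t' = k i' - 1 by omega, pv_last hk i'] at h
            exact absurd h (by simp [gw])
        · rw [show t' = 0 by omega, pv_zero i'] at h
          exact absurd h (by simp [gu])
      · -- t = k i - 1
        rw [show t = k i - 1 by omega, pv_last hk i] at h
        rcases Nat.lt_or_ge 0 t' with h1' | h1'
        · rcases Nat.lt_or_ge t' (k i' - 1) with h2' | h2'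
          · rw [pv_mid i' t' h1' h2'] at h; exact absurd h (by simp [gw])
          · right; left; omega
        · rw [show t' = 0 by omega, pv_zero i'] at h
          exact absurd h (by simp [gu, gw])
    · -- t = 0
      rw [show t = 0 by omega, pv_zero i] at h
      rcases Nat.lt_or_ge 0 t' with h1' | h1'
      · rcases Nat.lt_or_ge t' (k i' - 1) with h2' | h2'
        · rw [pv_mid i' t' h1' h2'] at h; exact absurd h (by simp [gu])
        · rw [show t' = k i' - 1 by omega, pv_last hk i'] at h
          exact absurd h (by simp [gu, gw])
      · left; omega
  · rintro (⟨rfl, rfl⟩ | ⟨rfl, rfl⟩ | ⟨rfl, rfl, h1, h2⟩)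
    · rw [pv_zero, pv_zero]
    · rw [pv_last hk, pv_last hk]
    · rfl


lemma pv_eq_gu_iff {i : Fin n} {t : ℕ} (ht : t ≤ k i - 1) : pv n k i t = gu n k ↔ t = 0 := by
  have h3 := hk i
  rw [← pv_zero i, pv_eq_pv_iff hk ht (by omega)]
  constructor
  · rintro (⟨h, _⟩ | ⟨_, h⟩ | ⟨_, h, h', _⟩) <;> omega
  · intro h; left; exact ⟨h, rfl⟩

lemma pv_eq_gw_iff {i : Fin n} {t : ℕ} (ht : t ≤ k i - 1) : pv n k i t = gw n k ↔ t = k i - 1 := by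
  have h3 := hk i
  rw [← pv_last hk i, pv_eq_pv_iff hk ht (le_refl _)]
  constructor
  · rintro (⟨_, h⟩ | ⟨h, _⟩ | ⟨_, h, _, h'⟩) <;> omega
  · intro h; right; left; exact ⟨h, rfl⟩

omit hk in
lemma inr_ext {i : Fin n} {a b : Fin (k i - 2)} (h : a.val = b.val) :
    (Sum.inr ⟨i, a⟩ : GHingeVertex n k) = Sum.inr ⟨i, b⟩ := by
  rw [show a = b from Fin.ext h]

lemma Emap_injective : Function.Injective (Emap n k) := by
  rintro (_ | ⟨i, j⟩) (_ | ⟨i', j'⟩) h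
  · rfl
  · exfalso
    have h3 := hk i'
    have hj' := j'.isLt
    rw [Emap, Emap, Sym2.eq_iff] at h
    rcases h with ⟨h1, h2⟩ | ⟨h1, h2⟩
    · rw [eq_comm, pv_eq_gu_iff hk (by omega)] at h1
      rw [eq_comm, pv_eq_gw_iff hk (by omega)] at h2
      omega
    · rw [eq_comm, pv_eq_gu_iff hk (by omega)] at h1
      omega
  · exfalso
    have h3 := hk i
    have hj := j.isLt
    rw [Emap, Emap, Sym2.eq_iff] at h
    rcases h with ⟨h1, h2⟩ | ⟨h1, h2⟩
    · rw [pv_eq_gu_iff hk (by omega)] at h1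
      rw [pv_eq_gw_iff hk (by omega)] at h2
      omega
    · rw [pv_eq_gw_iff hk (by omega)] at h1
      omega
  · have h3 := hk i
    have h3' := hk i'
    have hj := j.isLt
    have hj' := j'.isLt
    rw [Emap, Emap, Sym2.eq_iff] at h
    have main : i = i' ∧ j.val = j'.val := by
      rcases h with ⟨h1, h2⟩ | ⟨h1, h2⟩
      · rw [pv_eq_pv_iff hk (by omega) (by omega)] at h1
        rw [pv_eq_pv_iff hk (by omega) (by omega)] at h2
        rcases h1 with ⟨e1, e2⟩ | ⟨e1, e2⟩ | ⟨rfl, e1, _, _⟩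
        · rcases h2 with ⟨f1, f2⟩ | ⟨f1, f2⟩ | ⟨rfl, f1, _, _⟩ <;> omega
        · omega
        · exact ⟨rfl, e1⟩
      · rw [pv_eq_pv_iff hk (by omega) (by omega)] at h1
        rw [pv_eq_pv_iff hk (by omega) (by omega)] at h2
        rcases h1 with ⟨e1, e2⟩ | ⟨e1, e2⟩ | ⟨rfl, e1, _, _⟩
        · omega
        · omega
        · rcases h2 with ⟨f1, f2⟩ | ⟨f1, f2⟩ | ⟨heq, f1, _, _⟩ <;> omega
    obtain ⟨rfl, hjj⟩ := main
    simp only [Option.some.injEq, Sigma.mk.inj_iff, heq_eq_eq, true_and]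
    exact Fin.ext hjj

omit hk in
lemma gHinge_adj {x y : GHingeVertex n k} :
    (GHinge n k).Adj x y ↔ x ≠ y ∧ (gHingeRelB n k x y = true ∨ gHingeRelB n k y x = true) := by
  rw [GHinge, SimpleGraph.fromRel_adj]

lemma Emap_mem_edgeSet (e : EIdx n k) : Emap n k e ∈ (GHinge n k).edgeSet := by
  match e with
  | none =>
    rw [Emap, SimpleGraph.mem_edgeSet, gHinge_adj]
    exact ⟨by simp [gu, gw], Or.inl (by simp [gu, gw, gHingeRelB])⟩
  | some ⟨i, j⟩ =>
    have h3 := hk i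
    have hj := j.isLt
    rw [Emap, SimpleGraph.mem_edgeSet, gHinge_adj]
    constructor
    · intro h
      rw [pv_eq_pv_iff hk (by omega) (by omega)] at h
      omega
    · left
      rcases Nat.eq_or_lt_of_le (Nat.zero_le j.val) with h0 | h0
      · -- j = 0
        rw [← h0]
        rcases Nat.lt_or_ge (0+1) (k i - 1) with h1 | h1
        · rw [pv_zero, pv_mid i 1 (by omega) (by omega)]
          simp [gu, gHingeRelB]
        · omega
      · rcases Nat.lt_or_ge (j.val + 1) (k i - 1) with h1 | h1
        · rw [pv_mid i j.val (by omega) (by omega), pv_mid i (j.val+1) (by omega) (by omega)]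
          simp only [gHingeRelB, Bool.and_eq_true, beq_iff_eq]
          exact ⟨trivial, by omega⟩
        · have hlast : j.val + 1 = k i - 1 := by omega
          rw [pv_mid i j.val (by omega) (by omega),
            show pv n k i (j.val + 1) = gw n k by rw [hlast, pv_last hk i]]
          simp only [gw, gHingeRelB, Bool.and_eq_true, beq_iff_eq]
          exact ⟨trivial, by omega⟩

lemma B_to_range {x y : GHingeVertex n k} (hxy : x ≠ y) (hB : gHingeRelB n k x y = true) :
    s(x, y) ∈ Set.range (Emap n k) := by
  match x, y with
  | Sum.inl a, Sum.inl b =>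
    refine ⟨none, ?_⟩
    rw [Emap]
    have hab : a ≠ b := fun h => hxy (by rw [h])
    fin_cases a <;> fin_cases b <;> simp_all [gu, gw, Sym2.eq_iff]
  | Sum.inl a, Sum.inr ⟨i, jj⟩ =>
    simp only [gHingeRelB, Bool.and_eq_true, beq_iff_eq] at hB
    obtain ⟨rfl, hj0⟩ := hB
    have h3 := hk i
    have hjlt := jj.isLt
    refine ⟨some ⟨i, ⟨0, by omega⟩⟩, ?_⟩
    rw [Emap, pv_zero, pv_mid i 1 (by omega) (by omega)]
    rw [Sym2.eq_iff]
    left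
    exact ⟨rfl, inr_ext (by simp [hj0])⟩
  | Sum.inr ⟨i, jj⟩, Sum.inl b =>
    simp only [gHingeRelB, Bool.and_eq_true, beq_iff_eq] at hB
    obtain ⟨rfl, hjv⟩ := hB
    have h3 := hk i
    have hjlt := jj.isLt
    refine ⟨some ⟨i, ⟨k i - 2, by omega⟩⟩, ?_⟩
    rw [Emap]
    have : k i - 2 + 1 = k i - 1 := by omega
    rw [this, pv_last hk i, pv_mid i (k i - 2) (by omega) (by omega)]
    rw [Sym2.eq_iff]
    left
    exact ⟨inr_ext (by simp; omega), rfl⟩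
  | Sum.inr ⟨i, jj⟩, Sum.inr ⟨i', jj'⟩ =>
    simp only [gHingeRelB, Bool.and_eq_true, beq_iff_eq] at hB
    obtain ⟨rfl, hjv⟩ := hB
    have h3 := hk i
    have hjlt := jj.isLt
    have hjlt' := jj'.isLt
    refine ⟨some ⟨i, ⟨jj.val + 1, by omega⟩⟩, ?_⟩
    rw [Emap, pv_mid i (jj.val + 1) (by omega) (by omega),
      pv_mid i (jj.val + 1 + 1) (by omega) (by omega)]
    rw [Sym2.eq_iff]
    left
    exact ⟨inr_ext (by simp), inr_ext (by simp [hjv])⟩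

lemma edgeSet_eq_range : (GHinge n k).edgeSet = Set.range (Emap n k) := by
  ext e
  constructor
  · intro he
    induction e using Sym2.ind with
    | _ x y =>
      rw [SimpleGraph.mem_edgeSet, gHinge_adj] at he
      obtain ⟨hxy, hB | hB⟩ := he
      · exact B_to_range hk hxy hB
      · rw [Sym2.eq_swap]
        exact B_to_range hk (Ne.symm hxy) hB
  · rintro ⟨t, rfl⟩
    exact Emap_mem_edgeSet hk t

abbrev TParam (n : ℕ) (k : Fin n → ℕ) : Type _ :=
  (∀ i, Fin (k i - 1)) ⊕ (Σ i₀ : Fin n, ∀ j : {j : Fin n // j ≠ i₀}, Fin (k j.1 - 1))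

def keep (n : ℕ) (k : Fin n → ℕ) : TParam n k → EIdx n k → Prop
  | .inl _, none => True
  | .inl m, some ⟨i, j⟩ => j ≠ m i
  | .inr _, none => False
  | .inr ⟨i₀, m⟩, some ⟨i, j⟩ => ∀ h : i ≠ i₀, j ≠ m ⟨i, h⟩

def keep' (n : ℕ) (k : Fin n → ℕ) (t : TParam n k) (i : Fin n) (jj : ℕ) : Prop :=
  ∀ h : jj < k i - 1, keep n k t (some ⟨i, ⟨jj, h⟩⟩)

def sTree (n : ℕ) (k : Fin n → ℕ) (t : TParam n k) : Set (Sym2 (GHingeVertex n k)) :=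
  Emap n k '' {e | keep n k t e}

lemma reach_seg (t : TParam n k) (i : Fin n) (d a : ℕ) (hb : a + d ≤ k i - 1)
    (hkeep : ∀ jj : ℕ, a ≤ jj → jj < a + d → keep' n k t i jj) :
    (SimpleGraph.fromEdgeSet (sTree n k t)).Reachable (pv n k i a) (pv n k i (a + d)) := by
  induction d generalizing a with
  | zero => exact Reachable.refl _
  | succ d ih =>
    have h3 := hk i
    have step : (SimpleGraph.fromEdgeSet (sTree n k t)).Adj (pv n k i a) (pv n k i (a+1)) := by
      rw [SimpleGraph.fromEdgeSet_adj]
      constructor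
      · exact ⟨some ⟨i, ⟨a, by omega⟩⟩, hkeep a le_rfl (by omega) (by omega), rfl⟩
      · intro h
        rw [pv_eq_pv_iff hk (by omega) (by omega)] at h
        omega
    have rest := ih (a+1) (by omega) (fun jj h1 h2 => hkeep jj (by omega) (by omega))
    rw [show a + 1 + d = a + (d+1) by omega] at rest
    exact step.reachable.trans rest

lemma reach_gu_gw (t : TParam n k) :
    (SimpleGraph.fromEdgeSet (sTree n k t)).Reachable (gu n k) (gw n k) := by
  match t with
  | .inl m =>
    refine Adj.reachable ?_
    rw [SimpleGraph.fromEdgeSet_adj]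
    exact ⟨⟨none, trivial, rfl⟩, by simp [gu, gw]⟩
  | .inr ⟨i₀, m⟩ =>
    have h3 := hk i₀
    have := reach_seg hk (.inr ⟨i₀, m⟩) i₀ (k i₀ - 1) 0 (by omega)
      (fun jj h1 h2 h3 => fun h : i₀ ≠ i₀ => absurd rfl h)
    rwa [pv_zero, show 0 + (k i₀ - 1) = k i₀ - 1 by omega, pv_last hk] at this

lemma reach_path_all (t : TParam n k) (i : Fin n) {s' : ℕ} (hs : s' ≤ k i - 1)
    (hall : ∀ jj, jj < k i - 1 → keep' n k t i jj) :
    (SimpleGraph.fromEdgeSet (sTree n k t)).Reachable (pv n k i s') (gu n k) := by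
  have := reach_seg hk t i s' 0 (by omega) (fun jj h1 h2 => hall jj (by omega))
  rw [pv_zero, show 0 + s' = s' by omega] at this
  exact this.symm

lemma reach_path_miss (t : TParam n k) (i : Fin n) (mv : ℕ) {s' : ℕ} (hs : s' ≤ k i - 1)
    (hmiss : ∀ jj, jj < k i - 1 → jj ≠ mv → keep' n k t i jj) :
    (SimpleGraph.fromEdgeSet (sTree n k t)).Reachable (pv n k i s') (gu n k) := by
  have h3 := hk i
  rcases le_or_gt s' mv with hc | hc
  · have := reach_seg hk t i s' 0 (by omega) (fun jj h1 h2 => hmiss jj (by omega) (by omega))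
    rw [pv_zero, show 0 + s' = s' by omega] at this
    exact this.symm
  · have := reach_seg hk t i (k i - 1 - s') s' (by omega)
      (fun jj h1 h2 => hmiss jj (by omega) (by omega))
    rw [show s' + (k i - 1 - s') = k i - 1 by omega, pv_last hk] at this
    exact (this.trans (reach_gu_gw hk t).symm)

lemma sTree_connected (t : TParam n k) :
    (SimpleGraph.fromEdgeSet (sTree n k t)).Connected := by
  rw [connected_iff_exists_forall_reachable]
  refine ⟨gu n k, fun x => ?_⟩
  match x with
  | Sum.inl a =>
    fin_cases a
    · exact Reachable.refl _
    · exact reach_gu_gw hk t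
  | Sum.inr ⟨i, jj⟩ =>
    have h3 := hk i
    have hjlt := jj.isLt
    have hx : (Sum.inr ⟨i, jj⟩ : GHingeVertex n k) = pv n k i (jj.val + 1) := by
      rw [pv_mid i (jj.val + 1) (by omega) (by omega)]
      exact (inr_ext (by simp)).symm
    rw [hx]
    refine Reachable.symm ?_
    match t with
    | .inl m =>
      exact reach_path_miss hk (.inl m) i (m i).val (by omega)
        (fun j2 h1 h2 h3' => fun he => h2 (by rw [← he]))
    | .inr ⟨i₀, m⟩ =>
      by_cases hi : i = i₀
      · subst hi
        exact reach_path_all hk _ i (by omega)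
          (fun j2 h1 h2 => fun h : i ≠ i => absurd rfl h)
      · exact reach_path_miss hk _ i (m ⟨i, hi⟩).val (by omega)
          (fun j2 h1 h2 h3' => fun h' hne => h2 (by rw [← hne]))

omit hk

set_option maxRecDepth 8000 in
lemma ncard_eq_sum' {α : Type*} [Fintype α] (S : Set α) [DecidablePred (· ∈ S)] :
    S.ncard = ∑ x, if x ∈ S then 1 else 0 := by
  have h : S.toFinset = Finset.univ.filter (· ∈ S) := by ext x; simp
  rw [Set.ncard_eq_toFinset_card', h, Finset.card_filter]

lemma ncard_sum (S : Set (EIdx n k)) [DecidablePred (· ∈ S)] :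
    S.ncard = (if none ∈ S then 1 else 0) +
      ∑ i, ({j : Fin (k i - 1) | some ⟨i, j⟩ ∈ S}).ncard := by
  rw [ncard_eq_sum' S, Fintype.sum_option]
  congr 1
  rw [← Finset.univ_sigma_univ, Finset.sum_sigma]
  refine Finset.sum_congr rfl fun i _ => ?_
  rw [ncard_eq_sum']
  rfl

lemma card_EIdx : Fintype.card (EIdx n k) = 1 + ∑ i, (k i - 1) := by
  rw [Fintype.card_option, Fintype.card_sigma]
  simp [Nat.add_comm]

lemma card_V : Fintype.card (GHingeVertex n k) = 2 + ∑ i, (k i - 2) := by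
  rw [Fintype.card_sum, Fintype.card_sigma]
  simp

lemma ncard_compl_singleton {α : Type*} [Fintype α] (a : α) :
    ({a}ᶜ : Set α).ncard = Fintype.card α - 1 := by
  have h := Set.ncard_add_ncard_compl ({a} : Set α)
  rw [Set.ncard_singleton, Nat.card_eq_fintype_card] at h
  omega

include hk

lemma sTree_ncard (t : TParam n k) : (sTree n k t).ncard = 1 + ∑ i, (k i - 2) := by
  classical
  rw [sTree, Set.ncard_image_of_injective _ (Emap_injective hk), ncard_sum]
  match t with
  | .inl m =>
    have hnone : (none : EIdx n k) ∈ {e | keep n k (.inl m) e} := trivial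
    rw [if_pos hnone]
    congr 1
    refine Finset.sum_congr rfl fun i _ => ?_
    have h3 := hk i
    have hset : {j : Fin (k i - 1) | some ⟨i, j⟩ ∈ {e | keep n k (.inl m) e}} = {m i}ᶜ := by
      ext j; simp [keep]
    rw [hset, ncard_compl_singleton, Fintype.card_fin]
    omega
  | .inr ⟨i₀, m⟩ =>
    have hnone : (none : EIdx n k) ∉ {e | keep n k (.inr ⟨i₀, m⟩) e} := fun h => h
    rw [if_neg hnone]
    have hterm : ∀ i, ({j : Fin (k i - 1) | some ⟨i, j⟩ ∈ {e | keep n k (.inr ⟨i₀, m⟩) e}}).ncard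
        = (k i - 2) + if i = i₀ then 1 else 0 := by
      intro i
      have h3 := hk i
      by_cases hi : i = i₀
      · subst hi
        have hset : {j : Fin (k i - 1) | some ⟨i, j⟩ ∈ {e | keep n k (.inr ⟨i, m⟩) e}}
            = Set.univ := by
          ext j
          simp only [Set.mem_setOf_eq, Set.mem_univ, iff_true]
          exact fun h => absurd rfl h
        rw [hset, if_pos rfl, Set.ncard_univ, Nat.card_eq_fintype_card, Fintype.card_fin]
        omega
      · have hset : {j : Fin (k i - 1) | some ⟨i, j⟩ ∈ {e | keep n k (.inr ⟨i₀, m⟩) e}}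
            = {m ⟨i, hi⟩}ᶜ := by
          ext j
          simp only [Set.mem_setOf_eq, Set.mem_compl_iff, Set.mem_singleton_iff]
          constructor
          · intro h; exact h hi
          · intro h h'; exact h
        rw [hset, if_neg hi, ncard_compl_singleton, Fintype.card_fin]
        omega
    rw [Finset.sum_congr rfl (fun i _ => hterm i), Finset.sum_add_distrib]
    rw [Finset.sum_ite_eq' Finset.univ i₀ (fun _ => 1), if_pos (Finset.mem_univ i₀)]
    omega

omit hk in
lemma reach_closed {V' : Type*} {G : SimpleGraph V'} {S : Set V'}
    (h : ∀ a ∈ S, ∀ b, G.Adj a b → b ∈ S) {x y : V'} (hx : x ∈ S) (r : G.Reachable x y) :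
    y ∈ S := by
  obtain ⟨p⟩ := r
  induction p with
  | nil => exact hx
  | cons h' q ih => exact ih (h _ hx _ h')

lemma miss_subsingleton {s : Set (Sym2 (GHingeVertex n k))} (hsub : s ⊆ (GHinge n k).edgeSet)
    (hconn : (SimpleGraph.fromEdgeSet s).Connected) (i : Fin n) :
    ({j : Fin (k i - 1) | Emap n k (some ⟨i, j⟩) ∈ s}ᶜ).Subsingleton := by
  have h3 := hk i
  rintro j0 hj0 j0' hj0'
  simp only [Set.mem_compl_iff, Set.mem_setOf_eq] at hj0 hj0'
  by_contra hne
  have key : ∀ (j j' : Fin (k i - 1)), Emap n k (some ⟨i, j⟩) ∉ s →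
      Emap n k (some ⟨i, j'⟩) ∉ s → j.val < j'.val → False := by
    intro j j' hj hj' hlt
    set S : Set (GHingeVertex n k) :=
      {x | ∃ t', j.val + 1 ≤ t' ∧ t' ≤ j'.val ∧ x = pv n k i t'} with hS
    have hclosed : ∀ a ∈ S, ∀ b, (SimpleGraph.fromEdgeSet s).Adj a b → b ∈ S := by
      rintro a ⟨t', ht1, ht2, rfl⟩ b hadj
      have hjlt := j.isLt
      have hjlt' := j'.isLt
      rw [SimpleGraph.fromEdgeSet_adj] at hadj
      obtain ⟨hmem, hne'⟩ := hadj
      obtain ⟨e, he⟩ := (edgeSet_eq_range hk ▸ hsub) hmem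
      match e with
      | none =>
        exfalso
        rw [Emap, Sym2.eq_iff] at he
        rcases he with ⟨h1, _⟩ | ⟨_, h1⟩
        · have := (pv_eq_gu_iff hk (show t' ≤ k i - 1 by omega)).mp h1.symm
          omega
        · have := (pv_eq_gw_iff hk (show t' ≤ k i - 1 by omega)).mp h1.symm
          omega
      | some ⟨i'', j''⟩ =>
        have hj''lt := j''.isLt
        have hein : Emap n k (some ⟨i'', j''⟩) ∈ s := he ▸ hmem
        rw [Emap, Sym2.eq_iff] at he
        rcases he with ⟨h1, h2⟩ | ⟨h2, h1⟩
        · -- h1 : pv i'' j'' = pv i t', h2 : pv i'' (j''+1) = b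
          have h1' := (pv_eq_pv_iff hk (show (j'' : ℕ) ≤ k i'' - 1 by omega)
            (show t' ≤ k i - 1 by omega)).mp h1
          rcases h1' with ⟨e1, e2⟩ | ⟨e1, e2⟩ | ⟨rfl, e1, _, _⟩
          · omega
          · omega
          · have hne1 : j''.val ≠ j'.val := by
              intro hh
              apply hj'
              rw [show j' = j'' from Fin.ext hh.symm]
              exact hein
            exact ⟨t' + 1, by omega, by omega, by rw [← h2]; congr 1; omega⟩
        · -- h1 : pv i'' (j''+1) = pv i t', h2 : pv i'' j'' = b
          have h1' := (pv_eq_pv_iff hk (show (j'' : ℕ) + 1 ≤ k i'' - 1 by omega)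
            (show t' ≤ k i - 1 by omega)).mp h1
          rcases h1' with ⟨e1, e2⟩ | ⟨e1, e2⟩ | ⟨rfl, e1, _, _⟩
          · omega
          · omega
          · have hne1 : j''.val ≠ j.val := by
              intro hh
              apply hj
              rw [show j = j'' from Fin.ext hh.symm]
              exact hein
            exact ⟨t' - 1, by omega, by omega, by rw [← h2]; congr 1; omega⟩
    have hstart : pv n k i (j.val + 1) ∈ S := ⟨j.val + 1, le_rfl, by omega, rfl⟩
    have hgu : gu n k ∈ S := reach_closed hclosed hstart
      (hconn.preconnected (pv n k i (j.val + 1)) (gu n k))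
    obtain ⟨t', ht1, ht2, hgu'⟩ := hgu
    have := (pv_eq_gu_iff hk (show t' ≤ k i - 1 by omega)).mp hgu'.symm
    omega
  rcases Nat.lt_trichotomy j0.val j0'.val with h | h | h
  · exact key j0 j0' hj0 hj0' h
  · exact hne (Fin.ext h)
  · exact key j0' j0 hj0' hj0 h

omit hk in
lemma keep_ext {t t' : TParam n k} (h : ∀ e, keep n k t e ↔ keep n k t' e) : t = t' := by
  match t, t' with
  | .inl m, .inl m' =>
    have : m = m' := by
      funext i
      by_contra hne
      exact ((h (some ⟨i, m i⟩)).mpr hne) rfl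
    rw [this]
  | .inl m, .inr ⟨i₀, m'⟩ => exact absurd ((h none).mp trivial) (fun f => f)
  | .inr ⟨i₀, m'⟩, .inl m => exact absurd ((h none).mpr trivial) (fun f => f)
  | .inr ⟨i₀, m⟩, .inr ⟨i₀', m'⟩ =>
    have hi : i₀ = i₀' := by
      by_contra hne
      have hne' : i₀' ≠ i₀ := Ne.symm hne
      exact ((h (some ⟨i₀', m ⟨i₀', hne'⟩⟩)).mpr
        (fun hh => absurd rfl hh)) hne' rfl
    subst hi
    have : m = m' := by
      funext j
      by_contra hne
      have hj2 := j.2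
      have hkeep1 : keep n k (.inr ⟨i₀, m⟩) (some ⟨j.1, m' j⟩) := by
        intro hh heq
        exact hne (show m j = m' j from heq.symm)
      exact ((h _).mp hkeep1) j.2 rfl
    rw [this]

include hk

lemma sTree_injective : Function.Injective (sTree n k) := by
  intro t t' h
  rw [sTree, sTree] at h
  have hset := Set.image_injective.mpr (Emap_injective hk) h
  exact keep_ext (fun e => Set.ext_iff.mp hset e)

lemma sTree_subset (t : TParam n k) : sTree n k t ⊆ (GHinge n k).edgeSet := by
  rintro e ⟨e', _, rfl⟩
  exact Emap_mem_edgeSet hk e'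

omit hk in
lemma fromEdgeSet_edgeSet_eq {s : Set (Sym2 (GHingeVertex n k))}
    (hsub : s ⊆ (GHinge n k).edgeSet) : (SimpleGraph.fromEdgeSet s).edgeSet = s := by
  rw [edgeSet_fromEdgeSet]
  ext e
  simp only [Set.mem_diff, Set.mem_setOf_eq, and_iff_left_iff_imp]
  intro hm hd
  exact (SimpleGraph.not_isDiag_of_mem_edgeSet _ (hsub hm)) hd

lemma sTree_isTree (t : TParam n k) : (SimpleGraph.fromEdgeSet (sTree n k t)).IsTree := by
  refine isTree_of_connected_of_card ((sTree n k t).ncard) _ ?_ (sTree_connected hk t) ?_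
  · exact congrArg Set.ncard (fromEdgeSet_edgeSet_eq (sTree_subset hk t))
  · rw [sTree_ncard hk t, card_V]
    omega

lemma mem_range_of_tree {s : Set (Sym2 (GHingeVertex n k))} (hsub : s ⊆ (GHinge n k).edgeSet)
    (htree : (SimpleGraph.fromEdgeSet s).IsTree) : ∃ t, sTree n k t = s := by
  classical
  set M : Set (EIdx n k) := Emap n k ⁻¹' s with hMdef
  have himg : Emap n k '' M = s :=
    Set.image_preimage_eq_of_subset (by rw [← edgeSet_eq_range hk]; exact hsub)
  have h1 := htree.card_edgeFinset
  rw [← Set.ncard_coe_finset, coe_edgeFinset, fromEdgeSet_edgeSet_eq hsub, card_V] at h1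
  have hMcard : (if (none : EIdx n k) ∈ M then 1 else 0) +
      ∑ i, ({j : Fin (k i - 1) | some ⟨i, j⟩ ∈ M}).ncard = 1 + ∑ i, (k i - 2) := by
    rw [← ncard_sum, ← Set.ncard_image_of_injective M (Emap_injective hk), himg]
    omega
  have hsum : ∀ i, ({j : Fin (k i - 1) | some ⟨i, j⟩ ∈ M}).ncard +
      ({j : Fin (k i - 1) | some ⟨i, j⟩ ∈ M}ᶜ).ncard = k i - 1 := by
    intro i
    have h := Set.ncard_add_ncard_compl {j : Fin (k i - 1) | some ⟨i, j⟩ ∈ M}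
    rwa [Nat.card_eq_fintype_card, Fintype.card_fin] at h
  have hcompl : ∀ i, ({j : Fin (k i - 1) | some ⟨i, j⟩ ∈ M}ᶜ).ncard ≤ 1 := by
    intro i
    refine (Set.ncard_le_one (Set.toFinite _)).mpr ?_
    exact miss_subsingleton hk hsub htree.isConnected i
  have hub : ∀ i, ({j : Fin (k i - 1) | some ⟨i, j⟩ ∈ M}).ncard ≤ k i - 1 := by
    intro i; have := hsum i; omega
  have hlb : ∀ i, k i - 2 ≤ ({j : Fin (k i - 1) | some ⟨i, j⟩ ∈ M}).ncard := by
    intro i; have := hsum i; have := hcompl i; have := hk i; omega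
  by_cases hnone : (none : EIdx n k) ∈ M
  · rw [if_pos hnone] at hMcard
    have hmc_eq : ∀ i, ({j : Fin (k i - 1) | some ⟨i, j⟩ ∈ M}).ncard = k i - 2 := by
      by_contra hcon
      push_neg at hcon
      obtain ⟨i1, hi1⟩ := hcon
      have hlt : ∑ i, (k i - 2) < ∑ i, ({j : Fin (k i - 1) | some ⟨i, j⟩ ∈ M}).ncard :=
        Finset.sum_lt_sum (fun i _ => hlb i)
          ⟨i1, Finset.mem_univ i1, lt_of_le_of_ne (hlb i1) (Ne.symm hi1)⟩
      omega
    have hone : ∀ i, ∃ x, ({j : Fin (k i - 1) | some ⟨i, j⟩ ∈ M}ᶜ) = {x} := by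
      intro i
      refine Set.ncard_eq_one.mp ?_
      have := hsum i
      have := hmc_eq i
      have := hk i
      omega
    choose m hm using hone
    refine ⟨.inl m, ?_⟩
    have hsetEq : {e | keep n k (.inl m) e} = M := by
      ext e
      match e with
    | none =>
      simp only [Set.mem_setOf_eq]
      exact iff_of_true trivial hnone
    | some ⟨i, j⟩ =>
      have hj := Set.ext_iff.mp (hm i) j
      simp only [Set.mem_compl_iff, Set.mem_setOf_eq, Set.mem_singleton_iff] at hj
      simp only [Set.mem_setOf_eq]
      show (j ≠ m i) ↔ _
      constructor
      · intro hne
        by_contra hmem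
        exact hne (hj.mp hmem)
      · intro hmem heq
        exact (hj.mpr heq) hmem
    rw [sTree, hsetEq]
    exact himg
  · rw [if_neg hnone] at hMcard
    -- exactly one full path
    have hex : ∃ i₀, ({j : Fin (k i₀ - 1) | some ⟨i₀, j⟩ ∈ M}).ncard = k i₀ - 1 := by
      by_contra hcon
      push_neg at hcon
      have hub' : ∀ i ∈ Finset.univ, ({j : Fin (k i - 1) | some ⟨i, j⟩ ∈ M}).ncard ≤ k i - 2 := by
        intro i _
        have := hub i; have := hcon i; have := hk i; omega
      have := Finset.sum_le_sum hub'
      omega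
    obtain ⟨i₀, hi₀⟩ := hex
    have hmc_eq : ∀ i, i ≠ i₀ → ({j : Fin (k i - 1) | some ⟨i, j⟩ ∈ M}).ncard = k i - 2 := by
      intro i hne
      by_contra hcon
      have hlt2 : ∑ i ∈ Finset.univ.erase i₀, (k i - 2) <
          ∑ i ∈ Finset.univ.erase i₀, ({j : Fin (k i - 1) | some ⟨i, j⟩ ∈ M}).ncard :=
        Finset.sum_lt_sum (fun i _ => hlb i)
          ⟨i, Finset.mem_erase.mpr ⟨hne, Finset.mem_univ i⟩,
            lt_of_le_of_ne (hlb i) (Ne.symm hcon)⟩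
      have h3 := hk i₀
      rw [← Finset.add_sum_erase Finset.univ _ (Finset.mem_univ i₀),
        ← Finset.add_sum_erase Finset.univ (fun i => k i - 2) (Finset.mem_univ i₀)] at hMcard
      beta_reduce at hMcard
      omega
    have hfull : ∀ j : Fin (k i₀ - 1), some ⟨i₀, j⟩ ∈ M := by
      intro j
      by_contra hno
      have hco : 0 < ({j : Fin (k i₀ - 1) | some ⟨i₀, j⟩ ∈ M}ᶜ).ncard :=
        (Set.ncard_pos (Set.toFinite _)).mpr ⟨j, hno⟩
      have := hsum i₀
      omega
    have hone : ∀ j : {j : Fin n // j ≠ i₀}, ∃ x,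
        ({j2 : Fin (k j.1 - 1) | some ⟨j.1, j2⟩ ∈ M}ᶜ) = {x} := by
      intro j
      refine Set.ncard_eq_one.mp ?_
      have := hsum j.1
      have := hmc_eq j.1 j.2
      have := hk j.1
      omega
    choose m hm using hone
    refine ⟨.inr ⟨i₀, m⟩, ?_⟩
    have hsetEq : {e | keep n k (.inr ⟨i₀, m⟩) e} = M := by
      ext e
      match e with
    | none =>
      simp only [Set.mem_setOf_eq]
      exact iff_of_false (fun f => f) hnone
    | some ⟨i, j⟩ =>
      simp only [Set.mem_setOf_eq]
      show (∀ h : i ≠ i₀, j ≠ m ⟨i, h⟩) ↔ _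
      by_cases hi : i = i₀
      · subst hi
        exact iff_of_true (fun hh => absurd rfl hh) (hfull j)
      · have hj := Set.ext_iff.mp (hm ⟨i, hi⟩) j
        simp only [Set.mem_compl_iff, Set.mem_setOf_eq, Set.mem_singleton_iff] at hj
        constructor
        · intro hne
          by_contra hmem
          exact hne hi (hj.mp hmem)
        · intro hmem hh heq
          exact (hj.mpr (show j = m ⟨i, hi⟩ from heq)) hmem
    rw [sTree, hsetEq]
    exact himg

end Hinge

/-- For `n ≥ 2` and `k₁, …, kₙ ≥ 3`, the number of spanning trees of the
hinge graph `H_{k₁-1,…,kₙ-1}` equals `∏ i (k_i-1) + ∑ i ∏_{j ≠ i} (k_j-1)`. -/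
theorem gHinge_spanningTreeCount (n : ℕ) (hn : 2 ≤ n) (k : Fin n → ℕ) (hk : ∀ i, 3 ≤ k i) :
    spanningTreeCount (GHinge n k) =
      (∏ i, (k i - 1)) + ∑ i, ∏ j ∈ Finset.univ.erase i, (k j - 1) := by
  classical
  have hset : {s : Set (Sym2 (GHingeVertex n k)) | s ⊆ (GHinge n k).edgeSet ∧
      (SimpleGraph.fromEdgeSet s).IsTree} = Set.range (sTree n k) := by
    ext s
    constructor
    · rintro ⟨h1, h2⟩
      obtain ⟨t, ht⟩ := mem_range_of_tree hk h1 h2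
      exact ⟨t, ht⟩
    · rintro ⟨t, rfl⟩
      exact ⟨sTree_subset hk t, sTree_isTree hk t⟩
  rw [spanningTreeCount, hset, ← Nat.card_coe_set_eq,
    Nat.card_congr (Equiv.ofInjective _ (sTree_injective hk)).symm,
    Nat.card_eq_fintype_card, Fintype.card_sum, Fintype.card_pi, Fintype.card_sigma]
  congr 1
  · exact Finset.prod_congr rfl fun i _ => Fintype.card_fin _
  · refine Finset.sum_congr rfl fun i₀ _ => ?_
    rw [Fintype.card_pi]
    have h1 : ∀ j : {j : Fin n // j ≠ i₀}, Fintype.card (Fin (k j.1 - 1)) = k j.1 - 1 :=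
      fun j => Fintype.card_fin _
    rw [Finset.prod_congr rfl (fun j _ => h1 j)]
    exact (Finset.prod_subtype (Finset.univ.erase i₀)
      (fun x => by simp [Finset.mem_erase]) (fun j => k j - 1)).symm
end

section
/- For an integer n ≥ 2 and integers k_1, …, k_n ≥ 3, the critical group K(H_{k_1−1,…,k_n−1}) of the hinge graph H_{k_1−1,…,k_n−1} is a finite group of cardinality ∏_{i=1}^n (k_i−1) + ∑_{i=1}^n ∏_{j≠i} (k_j−1). -/
open Matrix in
lemma mulVecLin_injective_of_det_ne_zero {ι : Type*} [Fintype ι] [DecidableEq ι]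
    {M : Matrix ι ι ℤ} (h : M.det ≠ 0) : Function.Injective M.mulVecLin := by
  intro x y hxy
  have h2 : M.adjugate *ᵥ (M *ᵥ x) = M.adjugate *ᵥ (M *ᵥ y) := by
    simpa [Matrix.mulVecLin_apply] using congrArg (fun v => M.adjugate *ᵥ v) hxy
  rw [Matrix.mulVec_mulVec, Matrix.mulVec_mulVec, Matrix.adjugate_mul,
    Matrix.smul_mulVec, Matrix.smul_mulVec, Matrix.one_mulVec, Matrix.one_mulVec] at h2
  exact smul_right_injective _ h h2

lemma index_range_mulVecLin {ι : Type*} [Fintype ι] [DecidableEq ι]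
    (M : Matrix ι ι ℤ) (hM : M.det ≠ 0) :
    (LinearMap.range M.mulVecLin).toAddSubgroup.index = M.det.natAbs := by
  classical
  set N : Submodule ℤ (ι → ℤ) := LinearMap.range M.mulVecLin with hN
  have hinj := mulVecLin_injective_of_det_ne_zero hM
  let e₀ : (ι → ℤ) ≃ₗ[ℤ] N := LinearEquiv.ofInjective M.mulVecLin hinj
  obtain ⟨nn, snf⟩ := N.smithNormalForm (Pi.basisFun ℤ ι)
  have hne : N.toAddSubgroup.index ≠ 0 :=
    Int.submodule_toAddSubgroup_index_ne_zero_iff.mpr ⟨e₀.symm⟩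
  have hnn : nn = Fintype.card ι := snf.toAddSubgroup_index_ne_zero_iff.mp hne
  -- index = ∏ natAbs (a i)
  have hidx : N.toAddSubgroup.index = ∏ i : Fin nn, (snf.a i).natAbs := by
    rw [snf.toAddSubgroup_index_eq_ite, if_pos hnn]
    congr 1
    ext i
    rw [Ideal.span_singleton_toAddSubgroup_eq_zmultiples, Int.index_zmultiples]
  -- the bijection from `Fin nn` to `ι`
  have hbij : Function.Bijective snf.f := by
    rw [Fintype.bijective_iff_injective_and_card]
    exact ⟨snf.f.injective, by simp [hnn]⟩
  let σ : Fin nn ≃ ι := Equiv.ofBijective snf.f hbij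
  -- det M = det (subtype ∘ e₀)
  have hdet1 : M.det = LinearMap.det (N.subtype ∘ₗ (e₀ : (ι → ℤ) →ₗ[ℤ] N)) := by
    have : (N.subtype ∘ₗ (e₀ : (ι → ℤ) →ₗ[ℤ] N)) = M.mulVecLin := by
      ext x : 1; rfl
    rw [this]
    have : M.mulVecLin = Matrix.toLin' M := by
      ext x; simp [Matrix.toLin'_apply]
    rw [this, LinearMap.det_toLin']
  let g : (ι → ℤ) ≃ₗ[ℤ] N := snf.bM.equiv (snf.bN.reindex σ) (Equiv.refl ι)
  have hassoc : Associated (LinearMap.det (N.subtype ∘ₗ (e₀ : (ι → ℤ) →ₗ[ℤ] N)))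
      (LinearMap.det (N.subtype ∘ₗ (g : (ι → ℤ) →ₗ[ℤ] N))) :=
    LinearMap.associated_det_comp_equiv _ _ _
  -- compute det (subtype ∘ g)
  have hdet2 : LinearMap.det (N.subtype ∘ₗ (g : (ι → ℤ) →ₗ[ℤ] N)) = ∏ i : Fin nn, snf.a i := by
    rw [← LinearMap.det_toMatrix snf.bM]
    have hmat : LinearMap.toMatrix snf.bM snf.bM
        (N.subtype ∘ₗ (g : (ι → ℤ) →ₗ[ℤ] N)) = Matrix.diagonal (fun y => snf.a (σ.symm y)) := by
      ext x y
      rw [LinearMap.toMatrix_apply]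
      have hfσ : snf.f (σ.symm y) = y := by
        have : σ (σ.symm y) = y := σ.apply_symm_apply y
        simpa [σ, Equiv.ofBijective] using this
      have hg : ((N.subtype ∘ₗ (g : (ι → ℤ) →ₗ[ℤ] N)) (snf.bM y) : ι → ℤ)
          = snf.a (σ.symm y) • snf.bM y := by
        have h1 : g (snf.bM y) = (snf.bN.reindex σ) y := by
          simp [g, Module.Basis.equiv_apply]
        calc ((N.subtype ∘ₗ (g : (ι → ℤ) →ₗ[ℤ] N)) (snf.bM y) : ι → ℤ)
            = ((g (snf.bM y) : N) : ι → ℤ) := rfl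
          _ = (((snf.bN.reindex σ) y : N) : ι → ℤ) := by rw [h1]
          _ = snf.a (σ.symm y) • snf.bM y := by
              rw [Module.Basis.reindex_apply, snf.snf (σ.symm y), hfσ]
      rw [hg]
      simp only [map_smul, Module.Basis.repr_self]
      rw [Finsupp.smul_single, smul_eq_mul, mul_one]
      by_cases h : x = y
      · subst h; simp [Matrix.diagonal_apply_eq]
      · rw [Matrix.diagonal_apply_ne _ h, Finsupp.single_eq_of_ne h]
    rw [hmat, Matrix.det_diagonal, ← Equiv.prod_comp σ.symm (fun i => snf.a i)]
  have : M.det.natAbs = (∏ i : Fin nn, snf.a i).natAbs := by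
    rw [hdet1, Int.natAbs_eq_iff_associated.mpr hassoc, hdet2]
  rw [this, hidx]
  exact (map_prod Int.natAbsHom _ Finset.univ).symm
section StepA
open Matrix

variable {V : Type*} [Fintype V] [DecidableEq V]

/-- splitting a sum over `V` at `v0` -/
lemma sum_split (v0 : V) (f : V → ℤ) :
    ∑ x, f x = f v0 + ∑ x : {x : V // x ≠ v0}, f x.1 := by
  classical
  rw [← Finset.add_sum_erase Finset.univ f (Finset.mem_univ v0)]
  congr 1
  exact Finset.sum_subtype (p := fun x => x ≠ v0) (Finset.univ.erase v0) (fun x => by simp) f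

variable (G : SimpleGraph V) [DecidableRel G.Adj]

lemma lap_row_sum_zero (v : V) : ∑ w, G.lapMatrix ℤ v w = 0 := by
  have h := congrFun (G.lapMatrix_mulVec_const_eq_zero (R := ℤ)) v
  simpa [Matrix.mulVec, dotProduct] using h

lemma lap_col_sum_zero (w : V) : ∑ v, G.lapMatrix ℤ v w = 0 := by
  have hsymm : Matrix.transpose (G.lapMatrix ℤ) = G.lapMatrix ℤ := G.isSymm_lapMatrix (R := ℤ)
  have hsym : ∀ v, G.lapMatrix ℤ v w = G.lapMatrix ℤ w v := by
    intro v
    simpa [Matrix.transpose_apply] using congrFun (congrFun hsymm w) v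
  rw [Finset.sum_congr rfl (fun v _ => hsym v)]
  exact lap_row_sum_zero G w

variable {ι : Type*} [Fintype ι] [DecidableEq ι] {v0 : V} (η : ι ≃ {x : V // x ≠ v0})

/-- The reduced Laplacian w.r.t. an indexing of `V \ {v0}`. -/
def redLap : Matrix ι ι ℤ := fun a b => G.lapMatrix ℤ (η a).1 (η b).1

/-- `Div⁰ ≃+ ℤ^{V - v0}`. -/
def div0Equiv : Div0 V ≃+ (ι → ℤ) where
  toFun D := fun a => D.1 (η a).1
  invFun y := ⟨fun x => if h : x = v0 then -(∑ a, y a) else y (η.symm ⟨x, h⟩), by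
    simp only [Div0, AddMonoidHom.mem_ker]
    show ∑ x : V, (if h : x = v0 then -(∑ a, y a) else y (η.symm ⟨x, h⟩)) = 0
    rw [sum_split v0 (fun x => if h : x = v0 then -(∑ a, y a) else y (η.symm ⟨x, h⟩)),
      dif_pos rfl]
    have h1 : ∑ x : {x : V // x ≠ v0},
        (if h : (x : V) = v0 then -(∑ a, y a) else y (η.symm ⟨(x : V), h⟩))
        = ∑ x : {x : V // x ≠ v0}, y (η.symm x) :=
      Finset.sum_congr rfl fun x _ => dif_neg x.2
    rw [h1, Equiv.sum_comp η.symm y]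
    ring⟩
  left_inv := by
    rintro ⟨D, hD⟩
    ext x
    simp only
    by_cases h : x = v0
    · rw [dif_pos h]
      have hsum : ∑ z, D z = 0 := hD
      rw [sum_split v0] at hsum
      have h2 : ∑ a, D (η a).1 = ∑ x : {x : V // x ≠ v0}, D x.1 :=
        Equiv.sum_comp η (fun x : {x : V // x ≠ v0} => D x.1)
      rw [h2, h]
      linarith
    · rw [dif_neg h, Equiv.apply_symm_apply]
  right_inv := by
    intro y
    ext a
    simp only
    rw [dif_neg (η a).2]
    congr 1
    rw [show (⟨(η a).1, (η a).2⟩ : {x : V // x ≠ v0}) = η a from rfl, Equiv.symm_apply_apply]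
  map_add' := by intro x y; rfl

lemma div0Equiv_map_prin :
    AddSubgroup.map (div0Equiv η : Div0 V ≃+ (ι → ℤ))
      ((Prin G).addSubgroupOf (Div0 V))
      = (LinearMap.range (redLap G η).mulVecLin).toAddSubgroup := by
  ext y
  simp only [AddSubgroup.mem_map, Submodule.mem_toAddSubgroup, LinearMap.mem_range]
  constructor
  · rintro ⟨⟨D, hD⟩, hmem, rfl⟩
    rw [AddSubgroup.mem_addSubgroupOf] at hmem
    obtain ⟨x, hx⟩ := hmem
    refine ⟨fun b => x (η b).1 - x v0, ?_⟩
    funext a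
    have hDval : D = (G.lapMatrix ℤ) *ᵥ x := hx.symm
    show ∑ b, redLap G η a b * (x (η b).1 - x v0) = D (η a).1
    have hrow : ∑ b, G.lapMatrix ℤ (η a).1 (η b).1 = - G.lapMatrix ℤ (η a).1 v0 := by
      have h0 := lap_row_sum_zero G (η a).1
      rw [sum_split v0] at h0
      have : ∑ b, G.lapMatrix ℤ (η a).1 (η b).1
          = ∑ w : {x : V // x ≠ v0}, G.lapMatrix ℤ (η a).1 w.1 :=
        Equiv.sum_comp η (fun w : {x : V // x ≠ v0} => G.lapMatrix ℤ (η a).1 w.1)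
      rw [this]; linarith
    have : ∑ b, redLap G η a b * (x (η b).1 - x v0)
        = ∑ b, G.lapMatrix ℤ (η a).1 (η b).1 * x (η b).1
          - (∑ b, G.lapMatrix ℤ (η a).1 (η b).1) * x v0 := by
      simp [redLap, mul_sub, Finset.sum_sub_distrib, Finset.sum_mul]
    rw [this, hrow, hDval]
    show _ = ∑ w, G.lapMatrix ℤ (η a).1 w * x w
    rw [sum_split v0 (fun w => G.lapMatrix ℤ (η a).1 w * x w)]
    have : ∑ b, G.lapMatrix ℤ (η a).1 (η b).1 * x (η b).1
        = ∑ w : {x : V // x ≠ v0}, G.lapMatrix ℤ (η a).1 w.1 * x w.1 :=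
      Equiv.sum_comp η (fun w : {x : V // x ≠ v0} => G.lapMatrix ℤ (η a).1 w.1 * x w.1)
    rw [this]; ring
  · rintro ⟨z, rfl⟩
    set x : V → ℤ := fun w => if h : w = v0 then 0 else z (η.symm ⟨w, h⟩) with hxdef
    set D : V → ℤ := (G.lapMatrix ℤ) *ᵥ x with hDdef
    have hD0 : D ∈ Div0 V := by
      simp only [Div0, AddMonoidHom.mem_ker, degHom, AddMonoidHom.coe_mk, ZeroHom.coe_mk]
      show ∑ v, ((G.lapMatrix ℤ) *ᵥ x) v = 0
      have : ∀ v, ((G.lapMatrix ℤ) *ᵥ x) v = ∑ w, G.lapMatrix ℤ v w * x w := fun v => rfl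
      rw [Finset.sum_congr rfl (fun v _ => this v), Finset.sum_comm]
      rw [Finset.sum_congr rfl (fun w _ => (Finset.sum_mul ..).symm)]
      rw [Finset.sum_congr rfl (fun w _ => by rw [lap_col_sum_zero G w, zero_mul])]
      simp
    refine ⟨⟨D, hD0⟩, ?_, ?_⟩
    · rw [AddSubgroup.mem_addSubgroupOf]
      exact ⟨x, rfl⟩
    · funext a
      show D (η a).1 = ((redLap G η).mulVecLin z) a
      show ∑ w, G.lapMatrix ℤ (η a).1 w * x w = ∑ b, redLap G η a b * z b
      rw [sum_split v0 (fun w => G.lapMatrix ℤ (η a).1 w * x w)]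
      have h1 : x v0 = 0 := by rw [hxdef]; simp
      have h2 : ∀ w : {x : V // x ≠ v0}, x w.1 = z (η.symm w) := by
        intro w; rw [hxdef]; simp only; rw [dif_neg w.2]
      have : ∑ w : {x : V // x ≠ v0}, G.lapMatrix ℤ (η a).1 w.1 * x w.1
          = ∑ b, redLap G η a b * z b := by
        rw [← Equiv.sum_comp η (fun w : {x : V // x ≠ v0} => G.lapMatrix ℤ (η a).1 w.1 * x w.1)]
        refine Finset.sum_congr rfl (fun b _ => ?_)
        rw [h2 (η b), Equiv.symm_apply_apply]; rfl
      rw [h1, this]; ring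

/-- Key reduction: cardinality of the critical group. -/
lemma criticalGroup_card_eq_det (hdet : (redLap G η).det ≠ 0) :
    Nat.card (CriticalGroup G) = (redLap G η).det.natAbs ∧ Finite (CriticalGroup G) := by
  have e := QuotientAddGroup.congr ((Prin G).addSubgroupOf (Div0 V))
    (LinearMap.range (redLap G η).mulVecLin).toAddSubgroup
    (div0Equiv η) (div0Equiv_map_prin G η)
  have hcard : Nat.card (CriticalGroup G)
      = (LinearMap.range (redLap G η).mulVecLin).toAddSubgroup.index :=
    Nat.card_congr e.toEquiv
  rw [index_range_mulVecLin _ hdet] at hcard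
  refine ⟨hcard, ?_⟩
  have : Nat.card (CriticalGroup G) ≠ 0 := by
    rw [hcard]; exact Int.natAbs_ne_zero.mpr hdet
  exact (Nat.card_ne_zero.mp this).2
section Helpers

variable {α : Type*} [AddCommMonoid α]

lemma ite_or_split {P Q : Prop} [Decidable P] [Decidable Q] (h : ¬(P ∧ Q)) (x y : α) :
    (if P then x else if Q then y else 0) = (if P then x else 0) + (if Q then y else 0) := by
  by_cases hP : P <;> by_cases hQ : Q <;> simp_all

lemma ite_or_one {P Q : Prop} [Decidable P] [Decidable Q] (h : ¬(P ∧ Q)) :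
    (if P ∨ Q then (1:ℕ) else 0) = (if P then 1 else 0) + (if Q then 1 else 0) := by
  by_cases hP : P <;> by_cases hQ : Q <;> simp_all

lemma fin_sum_pin {m c : ℕ} (f : Fin m → α) :
    ∑ j : Fin m, (if (j : ℕ) = c then f j else 0) = if h : c < m then f ⟨c, h⟩ else 0 := by
  by_cases h : c < m
  · rw [dif_pos h, Finset.sum_eq_single ⟨c, h⟩]
    · simp
    · intro b _ hb
      rw [if_neg (fun hc => hb (Fin.ext hc))]
    · simp
  · rw [dif_neg h]
    apply Finset.sum_eq_zero
    intro j _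
    rw [if_neg]
    omega
end Helpers

section Hinge
open Matrix

variable (n : ℕ) (k : Fin n → ℕ)

/-- index type for the reduced Laplacian -/
abbrev HIdxP : Type := (Σ i : Fin n, Fin (k i - 2)) ⊕ Unit

lemma adj_iff (x y : GHingeVertex n k) :
    (GHinge n k).Adj x y ↔ x ≠ y ∧ (gHingeRelB n k x y = true ∨ gHingeRelB n k y x = true) :=
  Iff.rfl

variable {n k}
variable (hk : ∀ i, 3 ≤ k i)

lemma adj_u_inl (b : Fin 2) :
    (GHinge n k).Adj (Sum.inl 0) (Sum.inl b) ↔ b ≠ 0 := by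
  rw [adj_iff]
  constructor
  · rintro ⟨hne, -⟩ rfl; exact hne rfl
  · intro hb
    refine ⟨fun hc => hb (by injection hc with h; exact h.symm), Or.inl ?_⟩
    simp [gHingeRelB, bne_iff_ne]
    exact fun hc => hb hc.symm

lemma adj_u_inr (p : Σ i : Fin n, Fin (k i - 2)) :
    (GHinge n k).Adj (Sum.inl 0) (Sum.inr p) ↔ (p.2 : ℕ) = 0 := by
  rw [adj_iff]
  simp [gHingeRelB]

lemma adj_w_inr (p : Σ i : Fin n, Fin (k i - 2)) :
    (GHinge n k).Adj (Sum.inl 1) (Sum.inr p) ↔ (p.2 : ℕ) = k p.1 - 3 := by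
  rw [adj_iff]
  simp [gHingeRelB]

lemma adj_inr_inr (p q : Σ i : Fin n, Fin (k i - 2)) :
    (GHinge n k).Adj (Sum.inr p) (Sum.inr q)
      ↔ p.1 = q.1 ∧ ((q.2 : ℕ) = (p.2 : ℕ) + 1 ∨ (p.2 : ℕ) = (q.2 : ℕ) + 1) := by
  rw [adj_iff]
  constructor
  · rintro ⟨hne, h | h⟩ <;> simp [gHingeRelB] at h
    · exact ⟨h.1, Or.inl h.2⟩
    · exact ⟨h.1.symm, Or.inr h.2⟩
  · rintro ⟨hij, h | h⟩
    · refine ⟨?_, Or.inl ?_⟩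
      · intro hc; injection hc with hc; rw [hc] at h; omega
      · simp [gHingeRelB]; exact ⟨hij, h⟩
    · refine ⟨?_, Or.inr ?_⟩
      · intro hc; injection hc with hc; rw [hc] at h; omega
      · simp [gHingeRelB]; exact ⟨hij.symm, h⟩

include hk in
lemma degree_gu : (GHinge n k).degree (Sum.inl 0 : GHingeVertex n k) = n + 1 := by
  have h := SimpleGraph.degree_eq_sum_if_adj (R := ℕ) (GHinge n k) (Sum.inl 0 : GHingeVertex n k)
  rw [Nat.cast_id] at h
  rw [h, Fintype.sum_sum_type]
  have h1 : ∑ b : Fin 2, (if (GHinge n k).Adj (Sum.inl 0) (Sum.inl b) then (1:ℕ) else 0) = 1 := by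
    rw [Fin.sum_univ_two]
    rw [if_neg (by rw [adj_u_inl]; simp), if_pos (by rw [adj_u_inl]; exact one_ne_zero)]
  have h2 : ∑ p : Σ i : Fin n, Fin (k i - 2),
      (if (GHinge n k).Adj (Sum.inl 0) (Sum.inr p) then (1:ℕ) else 0) = n := by
    rw [← Finset.univ_sigma_univ, Finset.sum_sigma]
    have : ∀ i : Fin n, ∑ j : Fin (k i - 2),
        (if (GHinge n k).Adj (Sum.inl 0) (Sum.inr ⟨i, j⟩) then (1:ℕ) else 0) = 1 := by
      intro i
      have : ∀ j : Fin (k i - 2),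
          (if (GHinge n k).Adj (Sum.inl 0) (Sum.inr ⟨i, j⟩) then (1:ℕ) else 0)
          = (if (j : ℕ) = 0 then (1:ℕ) else 0) := by
        intro j
        by_cases hj : (j : ℕ) = 0
        · rw [if_pos ((adj_u_inr ⟨i,j⟩).mpr hj), if_pos hj]
        · rw [if_neg (fun hc => hj ((adj_u_inr ⟨i,j⟩).mp hc)), if_neg hj]
      rw [Finset.sum_congr rfl (fun j _ => this j), fin_sum_pin (fun _ => (1:ℕ)),
        dif_pos (by have := hk i; omega)]
    rw [Finset.sum_congr rfl (fun i _ => this i)]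
    simp
  rw [h1, h2]
  omega

include hk in
lemma degree_gv (p : Σ i : Fin n, Fin (k i - 2)) :
    (GHinge n k).degree (Sum.inr p : GHingeVertex n k) = 2 := by
  obtain ⟨i, j⟩ := p
  have hm := hk i
  have hjlt := j.2
  have h := SimpleGraph.degree_eq_sum_if_adj (R := ℕ) (GHinge n k)
    (Sum.inr ⟨i, j⟩ : GHingeVertex n k)
  rw [Nat.cast_id] at h
  rw [h, Fintype.sum_sum_type]
  have h1 : ∑ b : Fin 2,
      (if (GHinge n k).Adj (Sum.inr ⟨i,j⟩) (Sum.inl b) then (1:ℕ) else 0)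
      = (if (j:ℕ) = 0 then 1 else 0) + (if (j:ℕ) = k i - 3 then 1 else 0) := by
    rw [Fin.sum_univ_two]
    congr 1
    · by_cases hj : (j:ℕ) = 0
      · rw [if_pos, if_pos hj]
        exact (GHinge n k).adj_symm ((adj_u_inr ⟨i,j⟩).mpr hj)
      · rw [if_neg, if_neg hj]
        intro hc
        exact hj ((adj_u_inr ⟨i,j⟩).mp ((GHinge n k).adj_symm hc))
    · by_cases hj : (j:ℕ) = k i - 3
      · rw [if_pos, if_pos hj]
        exact (GHinge n k).adj_symm ((adj_w_inr ⟨i,j⟩).mpr hj)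
      · rw [if_neg, if_neg hj]
        intro hc
        exact hj ((adj_w_inr ⟨i,j⟩).mp ((GHinge n k).adj_symm hc))
  have h2 : ∑ q : Σ i' : Fin n, Fin (k i' - 2),
      (if (GHinge n k).Adj (Sum.inr ⟨i,j⟩) (Sum.inr q) then (1:ℕ) else 0)
      = (if (j:ℕ) + 1 < k i - 2 then 1 else 0) + (if 1 ≤ (j:ℕ) then 1 else 0) := by
    rw [← Finset.univ_sigma_univ, Finset.sum_sigma]
    rw [Finset.sum_eq_single i]
    · have key : ∀ j' : Fin (k i - 2),
          (if (GHinge n k).Adj (Sum.inr ⟨i,j⟩) (Sum.inr ⟨i,j'⟩) then (1:ℕ) else 0)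
          = (if (j':ℕ) = (j:ℕ)+1 then (1:ℕ) else 0)
            + (if ((j':ℕ) = (j:ℕ)-1 ∧ 1 ≤ (j:ℕ)) then (1:ℕ) else 0) := by
        intro j'
        have hadj : (GHinge n k).Adj (Sum.inr ⟨i,j⟩) (Sum.inr ⟨i,j'⟩)
            ↔ ((j':ℕ) = (j:ℕ)+1 ∨ (j:ℕ) = (j':ℕ)+1) := by
          rw [adj_inr_inr]; simp
        by_cases h1 : (j':ℕ) = (j:ℕ)+1
        · rw [if_pos (hadj.mpr (Or.inl h1)), if_pos h1, if_neg (by omega)]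
        · by_cases h2 : (j:ℕ) = (j':ℕ)+1
          · rw [if_pos (hadj.mpr (Or.inr h2)), if_neg h1, if_pos (by omega)]
          · rw [if_neg (fun hc => by rcases hadj.mp hc with h | h; exacts [h1 h, h2 h]),
              if_neg h1, if_neg (by omega)]
      rw [Finset.sum_congr rfl (fun j' _ => key j'), Finset.sum_add_distrib]
      have hA : (∑ j' : Fin (k i - 2), if (j':ℕ) = (j:ℕ)+1 then (1:ℕ) else 0)
          = (if (j:ℕ)+1 < k i - 2 then 1 else 0) := by
        rw [fin_sum_pin (fun _ => (1:ℕ))]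
        split_ifs <;> rfl
      have hB : (∑ j' : Fin (k i - 2), if ((j':ℕ) = (j:ℕ)-1 ∧ 1 ≤ (j:ℕ)) then (1:ℕ) else 0)
          = (if 1 ≤ (j:ℕ) then 1 else 0) := by
        by_cases hj : 1 ≤ (j:ℕ)
        · rw [if_pos hj]
          have step : ∀ j' : Fin (k i - 2),
              (if ((j':ℕ) = (j:ℕ)-1 ∧ 1 ≤ (j:ℕ)) then (1:ℕ) else 0)
              = (if (j':ℕ) = (j:ℕ)-1 then (1:ℕ) else 0) := by
            intro j'; by_cases hc : (j':ℕ) = (j:ℕ)-1 <;> simp [hc, hj]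
          rw [Finset.sum_congr rfl (fun j' _ => step j'), fin_sum_pin (fun _ => (1:ℕ)),
            dif_pos (by omega)]
        · rw [if_neg hj]
          apply Finset.sum_eq_zero
          intro j' _
          exact if_neg (fun hc => hj hc.2)
      rw [hA, hB]
    · intro i' _ hi'
      apply Finset.sum_eq_zero
      intro j' _
      rw [if_neg]
      rw [adj_inr_inr]
      simp only [not_and]
      intro hc
      exact absurd hc.symm hi'
    · intro hc
      exact absurd (Finset.mem_univ i) hc
  rw [h1, h2]
  have h3 : k i - 3 = k i - 2 - 1 := by omega
  split_ifs <;> omega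

end Hinge
section Stage4
open Matrix

variable (n : ℕ) (k : Fin n → ℕ)

/-- explicit reduced Laplacian -/
def QZ : Matrix (HIdxP n k) (HIdxP n k) ℤ
  | Sum.inl p, Sum.inl q =>
      if p.1 = q.1 then
        (if (p.2 : ℕ) = (q.2 : ℕ) then 2
         else if (q.2 : ℕ) = (p.2 : ℕ) + 1 ∨ (p.2 : ℕ) = (q.2 : ℕ) + 1 then -1 else 0)
      else 0
  | Sum.inl p, Sum.inr _ => if (p.2 : ℕ) = 0 then -1 else 0
  | Sum.inr _, Sum.inl q => if (q.2 : ℕ) = 0 then -1 else 0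
  | Sum.inr _, Sum.inr _ => (n : ℤ) + 1

/-- the vertex indexing equivalence -/
def etaH : HIdxP n k ≃ {x : GHingeVertex n k // x ≠ gw n k} where
  toFun a := match a with
    | Sum.inl p => ⟨Sum.inr p, by simp [gw]⟩
    | Sum.inr _ => ⟨Sum.inl 0, by simp [gw]⟩
  invFun x := match x with
    | ⟨Sum.inl _, _⟩ => Sum.inr ()
    | ⟨Sum.inr p, _⟩ => Sum.inl p
  left_inv a := by rcases a with p | u <;> rfl
  right_inv x := by
    rcases x with ⟨y | p, h⟩
    · fin_cases y
      · rfl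
      · exact absurd (show (Sum.inl 1 : GHingeVertex n k) = gw n k from rfl)
          (by simpa [gw] using h)
    · rfl

lemma lap_entry {V : Type*} [Fintype V] [DecidableEq V] (G : SimpleGraph V)
    [DecidableRel G.Adj] (x y : V) :
    G.lapMatrix ℤ x y = (if x = y then (G.degree x : ℤ) else 0) - (if G.Adj x y then 1 else 0) := by
  simp [SimpleGraph.lapMatrix, SimpleGraph.degMatrix, Matrix.diagonal_apply,
    Matrix.sub_apply, SimpleGraph.adjMatrix_apply]

variable {n k}

lemma redLap_eq (hk : ∀ i, 3 ≤ k i) :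
    redLap (GHinge n k) (etaH n k) = QZ n k := by
  ext a b
  rcases a with p | u <;> rcases b with q | u'
  · -- inl inl : vertices inr p, inr q
    show (GHinge n k).lapMatrix ℤ (Sum.inr p) (Sum.inr q) = _
    rcases p with ⟨i, j⟩; rcases q with ⟨i', j'⟩
    rw [lap_entry]
    by_cases hi : i = i'
    · subst hi
      by_cases hj : j = j'
      · subst hj
        rw [if_pos rfl, if_neg (SimpleGraph.irrefl _), degree_gv hk ⟨i, j⟩]
        show ((2:ℕ):ℤ) - 0 = QZ n k (Sum.inl ⟨i,j⟩) (Sum.inl ⟨i,j⟩)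
        simp [QZ]
      · have hne : (Sum.inr ⟨i,j⟩ : GHingeVertex n k) ≠ Sum.inr ⟨i,j'⟩ := by
          intro hc; injection hc with hc
          exact hj (by
            have := congrArg (fun s : (Σ i : Fin n, Fin (k i - 2)) => (s.2 : ℕ)) hc
            exact Fin.ext this)
        rw [if_neg hne]
        have hjv : (j : ℕ) ≠ (j' : ℕ) := fun hc => hj (Fin.ext hc)
        show 0 - _ = QZ n k (Sum.inl ⟨i,j⟩) (Sum.inl ⟨i,j'⟩)
        by_cases hadj : ((j' : ℕ) = (j : ℕ) + 1 ∨ (j : ℕ) = (j' : ℕ) + 1)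
        · rw [if_pos ((adj_inr_inr ⟨i,j⟩ ⟨i,j'⟩).mpr ⟨rfl, hadj⟩)]
          simp [QZ, hjv, hadj]
        · rw [if_neg (fun hc => hadj ((adj_inr_inr ⟨i,j⟩ ⟨i,j'⟩).mp hc).2)]
          simp [QZ, hjv, hadj]
    · have hne : (Sum.inr ⟨i,j⟩ : GHingeVertex n k) ≠ Sum.inr ⟨i',j'⟩ := by
        intro hc; injection hc with hc
        exact hi (congrArg Sigma.fst hc)
      rw [if_neg hne, if_neg (fun hc => hi ((adj_inr_inr ⟨i,j⟩ ⟨i',j'⟩).mp hc).1)]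
      simp [QZ, hi]
  · -- inl inr : lap (inr p) (inl 0)
    show (GHinge n k).lapMatrix ℤ (Sum.inr p) (Sum.inl 0) = _
    rw [lap_entry, if_neg (by simp)]
    have hadj : (GHinge n k).Adj (Sum.inr p) (Sum.inl 0) ↔ (p.2 : ℕ) = 0 := by
      rw [SimpleGraph.adj_comm]; exact adj_u_inr p
    show 0 - _ = QZ n k (Sum.inl p) (Sum.inr u')
    by_cases hp : (p.2 : ℕ) = 0
    · rw [if_pos (hadj.mpr hp)]
      simp [QZ, hp]
    · rw [if_neg (fun hc => hp (hadj.mp hc))]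
      simp [QZ, hp]
  · -- inr inl
    show (GHinge n k).lapMatrix ℤ (Sum.inl 0) (Sum.inr q) = _
    rw [lap_entry, if_neg (by simp)]
    show 0 - _ = QZ n k (Sum.inr u) (Sum.inl q)
    by_cases hq : (q.2 : ℕ) = 0
    · rw [if_pos ((adj_u_inr q).mpr hq)]
      simp [QZ, hq]
    · rw [if_neg (fun hc => hq ((adj_u_inr q).mp hc))]
      simp [QZ, hq]
  · -- inr inr
    show (GHinge n k).lapMatrix ℤ (Sum.inl 0) (Sum.inl 0) = _
    rw [lap_entry, if_pos rfl, if_neg (SimpleGraph.irrefl _), degree_gu hk]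
    show ((n + 1 : ℕ) : ℤ) - 0 = QZ n k (Sum.inr u) (Sum.inr u')
    simp [QZ]

end Stage4
section Stage5
open Matrix

variable (n : ℕ) (k : Fin n → ℕ)

/-- lower triangular factor -/
def LoQ : Matrix (HIdxP n k) (HIdxP n k) ℚ
  | Sum.inl p, Sum.inl q =>
      if p.1 = q.1 then
        (if (p.2 : ℕ) = (q.2 : ℕ) then 1
         else if (p.2 : ℕ) = (q.2 : ℕ) + 1 then
           -(((q.2 : ℕ) : ℚ) + 1)/(((q.2 : ℕ) : ℚ) + 2) else 0)
      else 0
  | Sum.inl _, Sum.inr _ => 0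
  | Sum.inr _, Sum.inl q => -1/(((q.2 : ℕ) : ℚ) + 2)
  | Sum.inr _, Sum.inr _ => 1

/-- upper triangular factor -/
def UpQ : Matrix (HIdxP n k) (HIdxP n k) ℚ
  | Sum.inl p, Sum.inl q =>
      if p.1 = q.1 then
        (if (p.2 : ℕ) = (q.2 : ℕ) then (((p.2 : ℕ) : ℚ) + 2)/(((p.2 : ℕ) : ℚ) + 1)
         else if (q.2 : ℕ) = (p.2 : ℕ) + 1 then -1 else 0)
      else 0
  | Sum.inl p, Sum.inr _ => -1/(((p.2 : ℕ) : ℚ) + 1)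
  | Sum.inr _, Sum.inl _ => 0
  | Sum.inr _, Sum.inr _ => (n : ℚ) + 1 - ∑ i, ((k i - 2 : ℕ) : ℚ)/(((k i - 2 : ℕ) : ℚ) + 1)

variable {n k}

lemma up_col (i' : Fin n) (j' : Fin (k i' - 2)) (Y : HIdxP n k → ℚ) :
    ∑ c, Y c * UpQ n k c (Sum.inl ⟨i', j'⟩)
      = Y (Sum.inl ⟨i', j'⟩) * ((((j' : ℕ) : ℚ) + 2)/(((j' : ℕ) : ℚ) + 1))
        + (if 1 ≤ (j' : ℕ) then
            Y (Sum.inl ⟨i', ⟨(j' : ℕ) - 1, Nat.lt_of_le_of_lt (Nat.sub_le _ _) j'.isLt⟩⟩) * (-1)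
          else 0) := by
  rw [Fintype.sum_sum_type]
  have hu : ∑ u : Unit, Y (Sum.inr u) * UpQ n k (Sum.inr u) (Sum.inl ⟨i', j'⟩) = 0 := by
    simp [UpQ]
  rw [hu, add_zero, ← Finset.univ_sigma_univ, Finset.sum_sigma]
  rw [Finset.sum_eq_single i']
  · have key : ∀ j'' : Fin (k i' - 2),
        Y (Sum.inl ⟨i', j''⟩) * UpQ n k (Sum.inl ⟨i', j''⟩) (Sum.inl ⟨i', j'⟩)
        = (if (j'' : ℕ) = (j' : ℕ) then
            Y (Sum.inl ⟨i', j''⟩) * ((((j'' : ℕ) : ℚ) + 2)/(((j'' : ℕ) : ℚ) + 1)) else 0)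
          + (if (j'' : ℕ) = (j' : ℕ) - 1 then
              (if 1 ≤ (j' : ℕ) then Y (Sum.inl ⟨i', j''⟩) * (-1) else 0) else 0) := by
      intro j''
      simp only [UpQ, if_pos rfl]
      by_cases h1 : (j'' : ℕ) = (j' : ℕ)
      · rw [if_pos h1, if_pos h1]
        have hz : (if (j'' : ℕ) = (j' : ℕ) - 1 then
            (if 1 ≤ (j' : ℕ) then Y (Sum.inl ⟨i', j''⟩) * (-1) else 0) else 0) = 0 := by
          by_cases h3 : 1 ≤ (j' : ℕ)
          · rw [if_neg (by omega)]
          · by_cases h4 : (j'' : ℕ) = (j' : ℕ) - 1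
            · rw [if_pos h4, if_neg h3]
            · rw [if_neg h4]
        rw [hz, add_zero]
        simp
      · rw [if_neg h1, if_neg h1]
        by_cases h2 : (j' : ℕ) = (j'' : ℕ) + 1
        · rw [if_pos h2, if_pos (show (j'' : ℕ) = (j' : ℕ) - 1 by omega),
            if_pos (show 1 ≤ (j' : ℕ) by omega)]
          simp
        · rw [if_neg h2, if_neg (show ¬(j'' : ℕ) = (j' : ℕ) - 1 by omega)]
          simp
    rw [Finset.sum_congr rfl (fun j'' _ => key j''), Finset.sum_add_distrib,
      fin_sum_pin, fin_sum_pin, dif_pos j'.isLt,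
      dif_pos (Nat.lt_of_le_of_lt (Nat.sub_le _ _) j'.isLt)]
  · intro i'' _ hi''
    apply Finset.sum_eq_zero
    intro j'' _
    have : UpQ n k (Sum.inl ⟨i'', j''⟩) (Sum.inl ⟨i', j'⟩) = 0 := by
      simp only [UpQ]; rw [if_neg hi'']
    rw [this, mul_zero]
  · intro hc
    exact absurd (Finset.mem_univ i') hc

lemma lo_row (i : Fin n) (j : Fin (k i - 2)) (X : HIdxP n k → ℚ) :
    ∑ c, LoQ n k (Sum.inl ⟨i, j⟩) c * X c
      = X (Sum.inl ⟨i, j⟩)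
        + (if 1 ≤ (j : ℕ) then
            (-((((j : ℕ) - 1 : ℕ) : ℚ) + 1)/((((j : ℕ) - 1 : ℕ) : ℚ) + 2))
              * X (Sum.inl ⟨i, ⟨(j : ℕ) - 1, Nat.lt_of_le_of_lt (Nat.sub_le _ _) j.isLt⟩⟩)
          else 0) := by
  rw [Fintype.sum_sum_type]
  have hu : ∑ u : Unit, LoQ n k (Sum.inl ⟨i, j⟩) (Sum.inr u) * X (Sum.inr u) = 0 := by
    simp [LoQ]
  rw [hu, add_zero, ← Finset.univ_sigma_univ, Finset.sum_sigma]
  rw [Finset.sum_eq_single i]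
  · have key : ∀ j'' : Fin (k i - 2),
        LoQ n k (Sum.inl ⟨i, j⟩) (Sum.inl ⟨i, j''⟩) * X (Sum.inl ⟨i, j''⟩)
        = (if (j'' : ℕ) = (j : ℕ) then X (Sum.inl ⟨i, j''⟩) else 0)
          + (if (j'' : ℕ) = (j : ℕ) - 1 then
              (if 1 ≤ (j : ℕ) then
                (-(((j'' : ℕ) : ℚ) + 1)/(((j'' : ℕ) : ℚ) + 2)) * X (Sum.inl ⟨i, j''⟩)
              else 0) else 0) := by
      intro j''
      simp only [LoQ, if_pos rfl]
      by_cases h1 : (j : ℕ) = (j'' : ℕ)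
      · rw [if_pos h1, if_pos (show (j'' : ℕ) = (j : ℕ) by omega)]
        have hz : (if (j'' : ℕ) = (j : ℕ) - 1 then
            (if 1 ≤ (j : ℕ) then
              (-(((j'' : ℕ) : ℚ) + 1)/(((j'' : ℕ) : ℚ) + 2)) * X (Sum.inl ⟨i, j''⟩)
            else 0) else 0) = 0 := by
          by_cases h3 : 1 ≤ (j : ℕ)
          · rw [if_neg (by omega)]
          · by_cases h4 : (j'' : ℕ) = (j : ℕ) - 1
            · rw [if_pos h4, if_neg h3]
            · rw [if_neg h4]
        rw [hz, add_zero]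
        simp
      · rw [if_neg h1, if_neg (show ¬(j'' : ℕ) = (j : ℕ) by omega)]
        by_cases h2 : (j : ℕ) = (j'' : ℕ) + 1
        · rw [if_pos h2, if_pos (show (j'' : ℕ) = (j : ℕ) - 1 by omega),
            if_pos (show 1 ≤ (j : ℕ) by omega), zero_add]
          simp
        · rw [if_neg h2, if_neg (show ¬(j'' : ℕ) = (j : ℕ) - 1 by omega)]
          simp
    rw [Finset.sum_congr rfl (fun j'' _ => key j''), Finset.sum_add_distrib,
      fin_sum_pin, fin_sum_pin, dif_pos j.isLt,
      dif_pos (Nat.lt_of_le_of_lt (Nat.sub_le _ _) j.isLt)]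
  · intro i'' _ hi''
    apply Finset.sum_eq_zero
    intro j'' _
    have : LoQ n k (Sum.inl ⟨i, j⟩) (Sum.inl ⟨i'', j''⟩) = 0 := by
      simp only [LoQ]; rw [if_neg (fun hc => hi'' hc.symm)]
    rw [this, zero_mul]
  · intro hc
    exact absurd (Finset.mem_univ i) hc

lemma lo_row_u (X : HIdxP n k → ℚ) :
    ∑ c, LoQ n k (Sum.inr ()) c * X c
      = X (Sum.inr ())
        + ∑ i, ∑ j : Fin (k i - 2), (-1/(((j : ℕ) : ℚ) + 2)) * X (Sum.inl ⟨i, j⟩) := by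
  rw [Fintype.sum_sum_type]
  have hu : ∑ u : Unit, LoQ n k (Sum.inr ()) (Sum.inr u) * X (Sum.inr u) = X (Sum.inr ()) := by
    simp [LoQ]
  rw [hu, ← Finset.univ_sigma_univ, Finset.sum_sigma, add_comm]
  rfl

lemma telescope_sum (m : ℕ) :
    ∑ j : Fin m, (-1/(((j : ℕ) : ℚ) + 2)) * (-1/(((j : ℕ) : ℚ) + 1))
      = (m : ℚ)/((m : ℚ) + 1) := by
  induction m with
  | zero => simp
  | succ m ih =>
    rw [Fin.sum_univ_castSucc]
    simp only [Fin.coe_castSucc, Fin.val_last, ih]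
    have h1 : (m : ℚ) + 1 ≠ 0 := by positivity
    have h2 : (m : ℚ) + 2 ≠ 0 := by positivity
    push_cast
    field_simp
    ring

lemma telescope_prod (m : ℕ) :
    ∏ j : Fin m, ((((j : ℕ) : ℚ) + 2)/(((j : ℕ) : ℚ) + 1)) = (m : ℚ) + 1 := by
  induction m with
  | zero => simp
  | succ m ih =>
    rw [Fin.prod_univ_castSucc]
    simp only [Fin.coe_castSucc, Fin.val_last, ih]
    have h1 : (m : ℚ) + 1 ≠ 0 := by positivity
    push_cast
    field_simp
    ring

/-- the LU factorization -/
lemma lu_fact : (QZ n k).map (fun x => (x : ℚ)) = LoQ n k * UpQ n k := by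
  ext a b
  rw [Matrix.mul_apply, Matrix.map_apply]
  rcases b with q | u'
  · rcases q with ⟨i', j'⟩
    rw [up_col i' j' (fun c => LoQ n k a c)]
    have hj'1 : (((j' : ℕ) : ℚ) + 1) ≠ 0 := by positivity
    have hj'2 : (((j' : ℕ) : ℚ) + 2) ≠ 0 := by positivity
    have hj'1' : (1 + ((j' : ℕ) : ℚ)) ≠ 0 := by positivity
    have hj'2' : (2 + ((j' : ℕ) : ℚ)) ≠ 0 := by positivity
    rcases a with p | u
    · rcases p with ⟨i, j⟩
      have hjlt := j.isLt
      have hj'lt := j'.isLt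
      by_cases hi : i = i'
      · subst hi
        have hL1 : LoQ n k (Sum.inl ⟨i, j⟩) (Sum.inl ⟨i, j'⟩)
            = (if (j : ℕ) = (j' : ℕ) then 1 else if (j : ℕ) = (j' : ℕ) + 1
                then -(((j' : ℕ) : ℚ) + 1)/(((j' : ℕ) : ℚ) + 2) else 0) := by
          simp only [LoQ, eq_self_iff_true, if_true]
        have hL2 : LoQ n k (Sum.inl ⟨i, j⟩)
              (Sum.inl ⟨i, ⟨(j' : ℕ) - 1, Nat.lt_of_le_of_lt (Nat.sub_le _ _) j'.isLt⟩⟩)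
            = (if (j : ℕ) = (j' : ℕ) - 1 then 1 else if (j : ℕ) = ((j' : ℕ) - 1) + 1
                then -((((j' : ℕ) - 1 : ℕ) : ℚ) + 1)/((((j' : ℕ) - 1 : ℕ) : ℚ) + 2) else 0) := by
          simp only [LoQ, eq_self_iff_true, if_true]
        rw [hL1, hL2]
        by_cases h1 : (j : ℕ) = (j' : ℕ)
        · have hQ : QZ n k (Sum.inl ⟨i, j⟩) (Sum.inl ⟨i, j'⟩) = 2 := by
            simp only [QZ, h1, eq_self_iff_true, if_true]
          rw [hQ, if_pos h1]
          by_cases h3 : 1 ≤ (j' : ℕ)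
          · rw [if_pos h3, if_neg (by omega), if_pos (by omega)]
            have hc : ((((j' : ℕ) - 1 : ℕ)) : ℚ) = ((j' : ℕ) : ℚ) - 1 := by
              push_cast [Nat.cast_sub h3]; ring
            rw [hc, show ((j' : ℕ) : ℚ) - 1 + 2 = ((j' : ℕ) : ℚ) + 1 by ring,
              show ((j' : ℕ) : ℚ) - 1 + 1 = ((j' : ℕ) : ℚ) by ring]
            push_cast
            field_simp
            ring
          · rw [if_neg h3]
            have hj0 : ((j' : ℕ) : ℚ) = 0 := by
              have : (j' : ℕ) = 0 := by omega
              rw [this]; norm_num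
            rw [hj0]
            norm_num
        · by_cases h2 : (j : ℕ) = (j' : ℕ) + 1
          · have hQ : QZ n k (Sum.inl ⟨i, j⟩) (Sum.inl ⟨i, j'⟩) = -1 := by
              simp only [QZ, eq_self_iff_true, if_true]
              rw [if_neg h1, if_pos (by omega)]
            rw [hQ, if_neg h1, if_pos h2]
            have hz2 : (if 1 ≤ (j' : ℕ) then
                (if (j : ℕ) = (j' : ℕ) - 1 then 1 else if (j : ℕ) = ((j' : ℕ) - 1) + 1
                  then -((((j' : ℕ) - 1 : ℕ) : ℚ) + 1)/((((j' : ℕ) - 1 : ℕ) : ℚ) + 2) else 0)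
                  * (-1) else 0) = 0 := by
              by_cases h3 : 1 ≤ (j' : ℕ)
              · rw [if_pos h3, if_neg (by omega), if_neg (by omega)]
                ring
              · rw [if_neg h3]
            rw [hz2]
            push_cast
            field_simp
            norm_num
          · by_cases h4 : (j' : ℕ) = (j : ℕ) + 1
            · have hQ : QZ n k (Sum.inl ⟨i, j⟩) (Sum.inl ⟨i, j'⟩) = -1 := by
                simp only [QZ, eq_self_iff_true, if_true]
                rw [if_neg h1, if_pos (by omega)]
              rw [hQ, if_neg h1, if_neg h2, if_pos (by omega),
                if_pos (by omega : (j : ℕ) = (j' : ℕ) - 1)]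
              push_cast
              ring
            · have hQ : QZ n k (Sum.inl ⟨i, j⟩) (Sum.inl ⟨i, j'⟩) = 0 := by
                simp only [QZ, eq_self_iff_true, if_true]
                rw [if_neg h1, if_neg (by omega)]
              rw [hQ]
              rw [if_neg h1, if_neg h2]
              have hz2 : (if 1 ≤ (j' : ℕ) then
                  (if (j : ℕ) = (j' : ℕ) - 1 then 1 else if (j : ℕ) = ((j' : ℕ) - 1) + 1
                    then -((((j' : ℕ) - 1 : ℕ) : ℚ) + 1)/((((j' : ℕ) - 1 : ℕ) : ℚ) + 2) else 0)
                    * (-1) else 0) = 0 := by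
                by_cases h3 : 1 ≤ (j' : ℕ)
                · rw [if_pos h3, if_neg (by omega), if_neg (by omega)]
                  ring
                · rw [if_neg h3]
              rw [hz2]
              norm_num
      · have hQ : QZ n k (Sum.inl ⟨i, j⟩) (Sum.inl ⟨i', j'⟩) = 0 := by
          simp only [QZ]; rw [if_neg hi]
        have hL1 : LoQ n k (Sum.inl ⟨i, j⟩) (Sum.inl ⟨i', j'⟩) = 0 := by
          simp only [LoQ]; rw [if_neg hi]
        have hL2 : LoQ n k (Sum.inl ⟨i, j⟩)
              (Sum.inl ⟨i', ⟨(j' : ℕ) - 1, Nat.lt_of_le_of_lt (Nat.sub_le _ _) j'.isLt⟩⟩) = 0 := by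
          simp only [LoQ]; rw [if_neg hi]
        rw [hQ, hL1, hL2]
        simp
    · -- a = inr u, b = inl
      have hL1 : LoQ n k (Sum.inr u) (Sum.inl ⟨i', j'⟩) = -1/(((j' : ℕ) : ℚ) + 2) := rfl
      have hL2 : LoQ n k (Sum.inr u)
            (Sum.inl ⟨i', ⟨(j' : ℕ) - 1, Nat.lt_of_le_of_lt (Nat.sub_le _ _) j'.isLt⟩⟩)
          = -1/((((j' : ℕ) - 1 : ℕ) : ℚ) + 2) := rfl
      rw [hL1, hL2]
      by_cases h3 : 1 ≤ (j' : ℕ)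
      · have hQ : QZ n k (Sum.inr u) (Sum.inl ⟨i', j'⟩) = 0 := by
          simp only [QZ]; rw [if_neg (by omega)]
        rw [hQ, if_pos h3]
        have hc : ((((j' : ℕ) - 1 : ℕ)) : ℚ) = ((j' : ℕ) : ℚ) - 1 := by
          push_cast [Nat.cast_sub h3]; ring
        rw [hc, show ((j' : ℕ) : ℚ) - 1 + 2 = ((j' : ℕ) : ℚ) + 1 by ring]
        push_cast
        field_simp
        ring
      · have hQ : QZ n k (Sum.inr u) (Sum.inl ⟨i', j'⟩) = -1 := by
          simp only [QZ]; rw [if_pos (by omega)]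
        rw [hQ, if_neg h3]
        have hj0 : ((j' : ℕ) : ℚ) = 0 := by
          have : (j' : ℕ) = 0 := by omega
          rw [this]; norm_num
        rw [hj0]
        norm_num
  · -- b = inr u'
    rcases a with p | u
    · rcases p with ⟨i, j⟩
      rw [lo_row i j (fun c => UpQ n k c (Sum.inr u'))]
      have hU1 : UpQ n k (Sum.inl ⟨i, j⟩) (Sum.inr u') = -1/(((j : ℕ) : ℚ) + 1) := rfl
      have hU2 : UpQ n k
            (Sum.inl ⟨i, ⟨(j : ℕ) - 1, Nat.lt_of_le_of_lt (Nat.sub_le _ _) j.isLt⟩⟩) (Sum.inr u')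
          = -1/((((j : ℕ) - 1 : ℕ) : ℚ) + 1) := rfl
      rw [hU1, hU2]
      by_cases h3 : 1 ≤ (j : ℕ)
      · have hQ : QZ n k (Sum.inl ⟨i, j⟩) (Sum.inr u') = 0 := by
          simp only [QZ]; rw [if_neg (by omega)]
        rw [hQ, if_pos h3]
        have hc : ((((j : ℕ) - 1 : ℕ)) : ℚ) = ((j : ℕ) : ℚ) - 1 := by
          push_cast [Nat.cast_sub h3]; ring
        rw [hc, show ((j : ℕ) : ℚ) - 1 + 2 = ((j : ℕ) : ℚ) + 1 by ring,
          show ((j : ℕ) : ℚ) - 1 + 1 = ((j : ℕ) : ℚ) by ring]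
        have hj1 : (((j : ℕ) : ℚ) + 1) ≠ 0 := by positivity
        have hj0 : ((j : ℕ) : ℚ) ≠ 0 := by
          have : 1 ≤ ((j : ℕ) : ℚ) := by exact_mod_cast h3
          intro hcon; nlinarith
        push_cast
        field_simp
        ring
      · have hQ : QZ n k (Sum.inl ⟨i, j⟩) (Sum.inr u') = -1 := by
          simp only [QZ]; rw [if_pos (by omega)]
        rw [hQ, if_neg h3]
        have hj0 : ((j : ℕ) : ℚ) = 0 := by
          have : (j : ℕ) = 0 := by omega
          rw [this]; norm_num
        rw [hj0]
        norm_num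
    · -- a = inr u, b = inr u'
      have hQ : QZ n k (Sum.inr u) (Sum.inr u') = (n : ℤ) + 1 := rfl
      rw [hQ]
      have hu : u = () := rfl
      rw [hu, lo_row_u (fun c => UpQ n k c (Sum.inr u'))]
      have hU0 : UpQ n k (Sum.inr ()) (Sum.inr u')
          = (n : ℚ) + 1 - ∑ i, ((k i - 2 : ℕ) : ℚ)/(((k i - 2 : ℕ) : ℚ) + 1) := rfl
      rw [hU0]
      have hsum : ∀ i : Fin n, ∑ j : Fin (k i - 2),
          (-1/(((j : ℕ) : ℚ) + 2)) * UpQ n k (Sum.inl ⟨i, j⟩) (Sum.inr u')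
          = ((k i - 2 : ℕ) : ℚ)/(((k i - 2 : ℕ) : ℚ) + 1) := by
        intro i
        have : ∀ j : Fin (k i - 2),
            (-1/(((j : ℕ) : ℚ) + 2)) * UpQ n k (Sum.inl ⟨i, j⟩) (Sum.inr u')
            = (-1/(((j : ℕ) : ℚ) + 2)) * (-1/(((j : ℕ) : ℚ) + 1)) := fun j => rfl
        rw [Finset.sum_congr rfl (fun j _ => this j), telescope_sum (k i - 2)]
      rw [Finset.sum_congr rfl (fun i _ => hsum i)]
      push_cast
      ring

end Stage5
section Stage6
open Matrix

variable (n : ℕ) (k : Fin n → ℕ)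

abbrev HLex : Type := Lex ((Σₗ i : Fin n, Fin (k i - 2)) ⊕ Unit)

def eLex : HLex n k ≃ HIdxP n k where
  toFun a := Sum.map (fun p => ofLex p) id (ofLex a)
  invFun x := toLex (Sum.map (fun p => toLex p) id x)
  left_inv a := by rcases a with p | u <;> rfl
  right_inv x := by rcases x with p | u <;> rfl

variable {n k}

lemma eLex_inl (p : Σₗ i : Fin n, Fin (k i - 2)) :
    eLex n k (Sum.inl p) = Sum.inl (ofLex p) := rfl

lemma eLex_inr (u : Unit) : eLex n k (Sum.inr u) = Sum.inr u := rfl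

lemma upq_triangular : ((UpQ n k).submatrix (eLex n k) (eLex n k)).BlockTriangular id := by
  intro a b hlt
  show UpQ n k (eLex n k a) (eLex n k b) = 0
  rcases a with pa | ua <;> rcases b with pb | ub
  · -- both inl
    have h := Sum.Lex.toLex_lt_toLex.mp hlt
    rw [Sum.lex_inl_inl] at h
    have h2 := Sigma.Lex.lt_def.mp h
    rw [eLex_inl, eLex_inl]
    rcases pa with ⟨ia, ja⟩
    rcases pb with ⟨ib, jb⟩
    rcases h2 with hfst | ⟨heq, hsnd⟩
    · show UpQ n k (Sum.inl ⟨ia, ja⟩) (Sum.inl ⟨ib, jb⟩) = 0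
      simp only [UpQ]
      rw [if_neg]
      intro hc
      have hfst' : ib < ia := hfst
      rw [hc] at hfst'
      exact lt_irrefl _ hfst' 
    · dsimp only at heq
      subst heq
      have hvl : (jb : ℕ) < (ja : ℕ) := hsnd
      show UpQ n k (Sum.inl ⟨ib, ja⟩) (Sum.inl ⟨ib, jb⟩) = 0
      simp only [UpQ, eq_self_iff_true, if_true]
      rw [if_neg (by omega), if_neg (by omega)]
  · -- a = inl, b = inr : inr < inl impossible
    have h := Sum.Lex.toLex_lt_toLex.mp hlt
    exact absurd h (by simp)
  · rfl
  · have h := Sum.Lex.toLex_lt_toLex.mp hlt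
    rw [Sum.lex_inr_inr] at h
    exact absurd h (lt_irrefl _)

lemma loq_triangular :
    ((LoQ n k).submatrix (eLex n k) (eLex n k)).BlockTriangular OrderDual.toDual := by
  intro a b hlt
  have hlt' : (a : HLex n k) < b := hlt
  show LoQ n k (eLex n k a) (eLex n k b) = 0
  rcases a with pa | ua <;> rcases b with pb | ub
  · have h := Sum.Lex.toLex_lt_toLex.mp hlt'
    rw [Sum.lex_inl_inl] at h
    have h2 := Sigma.Lex.lt_def.mp h
    rw [eLex_inl, eLex_inl]
    rcases pa with ⟨ia, ja⟩
    rcases pb with ⟨ib, jb⟩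
    rcases h2 with hfst | ⟨heq, hsnd⟩
    · show LoQ n k (Sum.inl ⟨ia, ja⟩) (Sum.inl ⟨ib, jb⟩) = 0
      simp only [LoQ]
      rw [if_neg]
      intro hc
      have hfst' : ia < ib := hfst
      rw [hc] at hfst'
      exact lt_irrefl _ hfst' 
    · dsimp only at heq
      subst heq
      have hvl : (ja : ℕ) < (jb : ℕ) := hsnd
      show LoQ n k (Sum.inl ⟨ia, ja⟩) (Sum.inl ⟨ia, jb⟩) = 0
      simp only [LoQ, eq_self_iff_true, if_true]
      rw [if_neg (by omega), if_neg (by omega)]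
  · rfl
  · have h := Sum.Lex.toLex_lt_toLex.mp hlt'
    exact absurd h (by simp)
  · have h := Sum.Lex.toLex_lt_toLex.mp hlt'
    rw [Sum.lex_inr_inr] at h
    exact absurd h (lt_irrefl _)

lemma det_LoQ : (LoQ n k).det = 1 := by
  rw [← Matrix.det_submatrix_equiv_self (eLex n k) (LoQ n k),
    Matrix.det_of_lowerTriangular _ loq_triangular]
  apply Finset.prod_eq_one
  intro a _
  rcases a with p | u
  · show LoQ n k (Sum.inl (ofLex p)) (Sum.inl (ofLex p)) = 1
    simp [LoQ]
  · rfl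

lemma det_UpQ : (UpQ n k).det
    = (∏ i, (((k i - 2 : ℕ) : ℚ) + 1))
      * ((n : ℚ) + 1 - ∑ i, ((k i - 2 : ℕ) : ℚ)/(((k i - 2 : ℕ) : ℚ) + 1)) := by
  rw [← Matrix.det_submatrix_equiv_self (eLex n k) (UpQ n k),
    Matrix.det_of_upperTriangular upq_triangular]
  have h1 : ∏ a : HLex n k, (UpQ n k).submatrix (eLex n k) (eLex n k) a a
      = ∏ x : HIdxP n k, UpQ n k x x := by
    exact Equiv.prod_comp (eLex n k) (fun x => UpQ n k x x)
  rw [h1, Fintype.prod_sum_type]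
  have h2 : ∏ p : Σ i : Fin n, Fin (k i - 2), UpQ n k (Sum.inl p) (Sum.inl p)
      = ∏ i, (((k i - 2 : ℕ) : ℚ) + 1) := by
    rw [← Finset.univ_sigma_univ, Finset.prod_sigma]
    apply Finset.prod_congr rfl
    intro i _
    have : ∀ j : Fin (k i - 2), UpQ n k (Sum.inl ⟨i, j⟩) (Sum.inl ⟨i, j⟩)
        = (((j : ℕ) : ℚ) + 2)/(((j : ℕ) : ℚ) + 1) := by
      intro j; simp [UpQ]
    rw [Finset.prod_congr rfl (fun j _ => this j), telescope_prod (k i - 2)]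
  rw [h2]
  simp [UpQ]

lemma det_QZ : (((QZ n k).det : ℤ) : ℚ)
    = (∏ i, (((k i - 2 : ℕ) : ℚ) + 1))
      * ((n : ℚ) + 1 - ∑ i, ((k i - 2 : ℕ) : ℚ)/(((k i - 2 : ℕ) : ℚ) + 1)) := by
  have hmap : ((QZ n k).map (fun x => (x : ℚ)))
      = (Int.castRingHom ℚ).mapMatrix (QZ n k) := by
    ext a b; simp [RingHom.mapMatrix_apply]
  have h := congrArg Matrix.det (lu_fact (n := n) (k := k))
  rw [Matrix.det_mul, det_LoQ, det_UpQ, one_mul, hmap] at h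
  rw [← RingHom.map_det] at h
  exact_mod_cast h

lemma final_value (hk : ∀ i, 3 ≤ k i) :
    (∏ i, (((k i - 2 : ℕ) : ℚ) + 1))
      * ((n : ℚ) + 1 - ∑ i, ((k i - 2 : ℕ) : ℚ)/(((k i - 2 : ℕ) : ℚ) + 1))
    = ((((∏ i, (k i - 1)) + ∑ i, ∏ j ∈ Finset.univ.erase i, (k j - 1) : ℕ)) : ℚ) := by
  set M : Fin n → ℚ := fun i => ((k i - 2 : ℕ) : ℚ) with hM
  set P : ℚ := ∏ i, (M i + 1) with hP
  set S : ℚ := ∑ i, ∏ j ∈ Finset.univ.erase i, (M j + 1) with hS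
  have hM0 : ∀ i, M i + 1 ≠ 0 := by intro i; rw [hM]; positivity
  have hPe : ∀ i : Fin n, (∏ j ∈ Finset.univ.erase i, (M j + 1)) * (M i + 1) = P :=
    fun i => Finset.prod_erase_mul _ _ (Finset.mem_univ i)
  have h1 : ∀ i : Fin n, P * (M i / (M i + 1)) = M i * ∏ j ∈ Finset.univ.erase i, (M j + 1) := by
    intro i
    rw [← hPe i]
    rw [mul_div_assoc', div_eq_iff (hM0 i)]
    ring
  have h3 : ∑ i, M i * ∏ j ∈ Finset.univ.erase i, (M j + 1) = n * P - S := by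
    have step : ∀ i : Fin n, M i * ∏ j ∈ Finset.univ.erase i, (M j + 1)
        = (∏ j ∈ Finset.univ.erase i, (M j + 1)) * (M i + 1)
          - ∏ j ∈ Finset.univ.erase i, (M j + 1) := by
      intro i; ring
    rw [Finset.sum_congr rfl (fun i _ => step i), Finset.sum_sub_distrib,
      Finset.sum_congr rfl (fun i _ => hPe i), Finset.sum_const, Finset.card_univ,
      Fintype.card_fin, nsmul_eq_mul, hS]
  have hcast : ((((∏ i, (k i - 1)) + ∑ i, ∏ j ∈ Finset.univ.erase i, (k j - 1) : ℕ)) : ℚ)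
      = P + S := by
    have hterm : ∀ j : Fin n, ((k j - 1 : ℕ) : ℚ) = M j + 1 := by
      intro j
      have h3 := hk j
      rw [hM]
      have e1 : k j - 1 = (k j - 2) + 1 := by omega
      rw [e1]
      push_cast
      ring
    rw [Nat.cast_add, Nat.cast_prod, Nat.cast_sum]
    congr 1
    · rw [hP]; exact Finset.prod_congr rfl (fun i _ => hterm i)
    · rw [hS]
      apply Finset.sum_congr rfl
      intro i _
      rw [Nat.cast_prod]
      exact Finset.prod_congr rfl (fun j _ => hterm j)
  rw [hcast, mul_sub, Finset.mul_sum, Finset.sum_congr rfl (fun i _ => h1 i), h3]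
  ring

end Stage6
/-- For `n ≥ 2` and `k₁, …, kₙ ≥ 3`, the critical group of the hinge graph
`H_{k₁-1,…,kₙ-1}` is a finite group of cardinality `∏ i (k_i-1) + ∑ i ∏_{j ≠ i} (k_j-1)`. -/
theorem gHinge_criticalGroup_card (n : ℕ) (hn : 2 ≤ n) (k : Fin n → ℕ) (hk : ∀ i, 3 ≤ k i) :
    Finite (CriticalGroup (GHinge n k)) ∧
      Nat.card (CriticalGroup (GHinge n k)) =
        (∏ i, (k i - 1)) + ∑ i, ∏ j ∈ Finset.univ.erase i, (k j - 1) := by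
  set N : ℕ := (∏ i, (k i - 1)) + ∑ i, ∏ j ∈ Finset.univ.erase i, (k j - 1) with hN
  have hNpos : 0 < N := by
    have hprod : 0 < ∏ i, (k i - 1) := by
      apply Finset.prod_pos
      intro i _
      have := hk i
      omega
    omega
  have hdetQ : (QZ n k).det = (N : ℤ) := by
    have h1 := det_QZ (n := n) (k := k)
    rw [final_value hk] at h1
    exact_mod_cast h1
  have hL : redLap (GHinge n k) (etaH n k) = QZ n k := redLap_eq hk
  have hdet0 : (redLap (GHinge n k) (etaH n k)).det ≠ 0 := by
    rw [hL, hdetQ]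
    exact_mod_cast hNpos.ne'
  obtain ⟨hcard, hfin⟩ := criticalGroup_card_eq_det (GHinge n k) (etaH n k) hdet0
  refine ⟨hfin, ?_⟩
  rw [hcard, hL, hdetQ, Int.natAbs_natCast]
end StepA
end

section
/- For an integer n ≥ 2 and integers k_1, …, k_n ≥ 3, let b = lcm(k_1−1, …, k_n−1). Then the class of the divisor δ in the critical group K(H_{k_1−1,…,k_n−1}) has additive order exactly b + ∑_{i=1}^n b/(k_i−1). -/
section aux
open Finset Matrix
variable {n : ℕ} {k : Fin n → ℕ}

lemma adj_ul_ur (a : Fin 2) (i : Fin n) (j : Fin (k i - 2)) :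
    (GHinge n k).Adj (Sum.inl a) (Sum.inr ⟨i, j⟩) ↔
      (a = 0 ∧ j.val = 0) ∨ (a = 1 ∧ j.val = k i - 3) := by
  simp [GHinge, gHingeRelB, SimpleGraph.fromRel_adj]

lemma adj_ur_ul (a : Fin 2) (i : Fin n) (j : Fin (k i - 2)) :
    (GHinge n k).Adj (Sum.inr ⟨i, j⟩) (Sum.inl a) ↔
      (a = 0 ∧ j.val = 0) ∨ (a = 1 ∧ j.val = k i - 3) := by
  rw [(GHinge n k).adj_comm, adj_ul_ur]

lemma adj_ul_ul (a b : Fin 2) : (GHinge n k).Adj (Sum.inl a) (Sum.inl b) ↔ a ≠ b := by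
  simp [GHinge, gHingeRelB, SimpleGraph.fromRel_adj]
  tauto

lemma adj_ur_ur (i i' : Fin n) (j : Fin (k i - 2)) (j' : Fin (k i' - 2)) :
    (GHinge n k).Adj (Sum.inr ⟨i, j⟩) (Sum.inr ⟨i', j'⟩) ↔
      ∃ _ : i = i', (j'.val = j.val + 1 ∨ j.val = j'.val + 1) := by
  simp only [GHinge, SimpleGraph.fromRel_adj, gHingeRelB, Bool.and_eq_true, beq_iff_eq, ne_eq,
    Sum.inr.injEq, Sigma.mk.inj_iff]
  constructor
  · rintro ⟨hne, (⟨h1, h2⟩ | ⟨h1, h2⟩)⟩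
    · exact ⟨h1, Or.inl h2⟩
    · exact ⟨h1.symm, Or.inr h2⟩
  · rintro ⟨rfl, (h | h)⟩
    · refine ⟨?_, Or.inl ⟨rfl, h⟩⟩
      simp only [heq_eq_eq, true_and]
      intro hj; rw [hj] at h; omega
    · refine ⟨?_, Or.inr ⟨rfl, h⟩⟩
      simp only [heq_eq_eq, true_and]
      intro hj; rw [hj] at h; omega

lemma lap_mulVec_apply' {V : Type*} [Fintype V] [DecidableEq V] (G : SimpleGraph V)
    [DecidableRel G.Adj] (x : V → ℤ) (v : V) :
    (G.lapMatrix ℤ *ᵥ x) v = ∑ y, if G.Adj v y then x v - x y else 0 := by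
  rw [SimpleGraph.lapMatrix_mulVec_apply]
  rw [show ∑ y, (if G.Adj v y then x v - x y else 0) = ∑ y ∈ G.neighborFinset v, (x v - x y) by
    rw [SimpleGraph.neighborFinset_eq_filter, ← Finset.sum_filter]]
  rw [Finset.sum_sub_distrib, Finset.sum_const, ← SimpleGraph.card_neighborFinset_eq_degree]
  ring

lemma sum_ite_fin {N : ℕ} (t : ℕ) (g : Fin N → ℤ) :
    (∑ j : Fin N, if j.val = t then g j else 0) = if h : t < N then g ⟨t, h⟩ else 0 := by
  split
  · next h =>
    rw [Finset.sum_eq_single (⟨t, h⟩ : Fin N)]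
    · simp
    · intro b _ hb; rw [if_neg]; simpa [Fin.ext_iff] using hb
    · simp
  · next h =>
    apply Finset.sum_eq_zero; intro j _; rw [if_neg]; omega

/-- The value of `x` at position `t` along the `i`-th path, `0 ↦ u`, `t ↦ v_{i,t}`
(`1 ≤ t ≤ k i - 2`), `k i - 1 ↦ w`. -/
def pathVal (x : GHingeVertex n k → ℤ) (i : Fin n) (t : ℕ) : ℤ :=
  if h : 0 < t ∧ t < k i - 1 then x (Sum.inr ⟨i, ⟨t - 1, by omega⟩⟩)
  else if t = 0 then x (Sum.inl 0) else x (Sum.inl 1)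

lemma pathVal_zero (x : GHingeVertex n k → ℤ) (i : Fin n) : pathVal x i 0 = x (Sum.inl 0) := by
  simp [pathVal]

lemma pathVal_last (x : GHingeVertex n k → ℤ) (i : Fin n) {t : ℕ} (h : k i - 1 ≤ t) (h0 : 0 < t) :
    pathVal x i t = x (Sum.inl 1) := by
  rw [pathVal, dif_neg (by omega), if_neg (by omega)]

lemma pathVal_mid (x : GHingeVertex n k → ℤ) (i : Fin n) {t : ℕ} (h0 : 0 < t) (h1 : t < k i - 1) :
    pathVal x i t = x (Sum.inr ⟨i, ⟨t - 1, by omega⟩⟩) := by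
  rw [pathVal, dif_pos ⟨h0, h1⟩]

lemma lap_u (hk : ∀ i, 3 ≤ k i) (x : GHingeVertex n k → ℤ) :
    ((GHinge n k).lapMatrix ℤ *ᵥ x) (Sum.inl 0) =
      (x (Sum.inl 0) - x (Sum.inl 1)) + ∑ i, (x (Sum.inl 0) - pathVal x i 1) := by
  rw [lap_mulVec_apply', Fintype.sum_sum_type, Fin.sum_univ_two,
    show (Finset.univ : Finset (Σ i : Fin n, Fin (k i - 2)))
      = Finset.univ.sigma fun _ => Finset.univ from (Finset.univ_sigma_univ).symm,
    Finset.sum_sigma]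
  rw [if_neg (by simp [adj_ul_ul]), if_pos ((adj_ul_ul 0 1).mpr (by decide)), zero_add]
  congr 1
  refine Finset.sum_congr rfl fun i _ => ?_
  rw [show (∑ j : Fin (k i - 2), if (GHinge n k).Adj (Sum.inl 0) (Sum.inr ⟨i, j⟩)
        then x (Sum.inl 0) - x (Sum.inr ⟨i, j⟩) else 0)
      = ∑ j : Fin (k i - 2), if j.val = 0 then x (Sum.inl 0) - x (Sum.inr ⟨i, j⟩) else 0 from
    Finset.sum_congr rfl fun j _ => if_congr (by simp [adj_ul_ur]) rfl rfl]
  rw [sum_ite_fin 0 (fun j => x (Sum.inl 0) - x (Sum.inr ⟨i, j⟩)),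
    dif_pos (show 0 < k i - 2 by have := hk i; omega)]
  rw [pathVal_mid x i (by omega) (by have := hk i; omega)]

lemma lap_w (hk : ∀ i, 3 ≤ k i) (x : GHingeVertex n k → ℤ) :
    ((GHinge n k).lapMatrix ℤ *ᵥ x) (Sum.inl 1) =
      (x (Sum.inl 1) - x (Sum.inl 0)) + ∑ i, (x (Sum.inl 1) - pathVal x i (k i - 2)) := by
  rw [lap_mulVec_apply', Fintype.sum_sum_type, Fin.sum_univ_two,
    show (Finset.univ : Finset (Σ i : Fin n, Fin (k i - 2)))
      = Finset.univ.sigma fun _ => Finset.univ from (Finset.univ_sigma_univ).symm,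
    Finset.sum_sigma]
  rw [if_pos ((adj_ul_ul 1 0).mpr (by decide)), if_neg (by simp [adj_ul_ul]), add_zero]
  congr 1
  refine Finset.sum_congr rfl fun i _ => ?_
  rw [show (∑ j : Fin (k i - 2), if (GHinge n k).Adj (Sum.inl 1) (Sum.inr ⟨i, j⟩)
        then x (Sum.inl 1) - x (Sum.inr ⟨i, j⟩) else 0)
      = ∑ j : Fin (k i - 2), if j.val = k i - 3 then x (Sum.inl 1) - x (Sum.inr ⟨i, j⟩) else 0 from
    Finset.sum_congr rfl fun j _ => if_congr (by simp [adj_ul_ur]) rfl rfl]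
  rw [sum_ite_fin (k i - 3) (fun j => x (Sum.inl 1) - x (Sum.inr ⟨i, j⟩)),
    dif_pos (show k i - 3 < k i - 2 by have := hk i; omega)]
  rw [pathVal_mid x i (by have := hk i; omega) (by have := hk i; omega)]
  exact congrArg (fun j : Fin (k i - 2) => x (Sum.inl 1) - x (Sum.inr ⟨i, j⟩)) (Fin.ext (show k i - 3 = k i - 2 - 1 by omega))
  
lemma x_eq_pathVal (x : GHingeVertex n k → ℤ) (i : Fin n) (t : ℕ) (h : t < k i - 2) :
    x (Sum.inr ⟨i, ⟨t, h⟩⟩) = pathVal x i (t + 1) := by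
  rw [pathVal, dif_pos ⟨Nat.succ_pos t, by omega⟩]
  exact congrArg (fun s : Fin (k i - 2) => x (Sum.inr ⟨i, s⟩)) (Fin.ext rfl)

lemma lap_v (hk : ∀ i, 3 ≤ k i) (x : GHingeVertex n k → ℤ) (i : Fin n) (j : Fin (k i - 2)) :
    ((GHinge n k).lapMatrix ℤ *ᵥ x) (Sum.inr ⟨i, j⟩) =
      (x (Sum.inr ⟨i, j⟩) - pathVal x i j.val)
        + (x (Sum.inr ⟨i, j⟩) - pathVal x i (j.val + 2)) := by
  have hki := hk i
  have hjlt := j.isLt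
  rw [lap_mulVec_apply', Fintype.sum_sum_type, Fin.sum_univ_two,
    show (Finset.univ : Finset (Σ i : Fin n, Fin (k i - 2)))
      = Finset.univ.sigma fun _ => Finset.univ from (Finset.univ_sigma_univ).symm,
    Finset.sum_sigma]
  rw [show (if (GHinge n k).Adj (Sum.inr ⟨i, j⟩) (Sum.inl 0)
        then x (Sum.inr ⟨i, j⟩) - x (Sum.inl 0) else 0)
      = if j.val = 0 then x (Sum.inr ⟨i, j⟩) - x (Sum.inl 0) else 0 from
    if_congr (by simp [adj_ur_ul]) rfl rfl]
  rw [show (if (GHinge n k).Adj (Sum.inr ⟨i, j⟩) (Sum.inl 1)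
        then x (Sum.inr ⟨i, j⟩) - x (Sum.inl 1) else 0)
      = if j.val = k i - 3 then x (Sum.inr ⟨i, j⟩) - x (Sum.inl 1) else 0 from
    if_congr (by simp [adj_ur_ul]) rfl rfl]
  have split : ∀ j' : Fin (k i - 2),
      (if (GHinge n k).Adj (Sum.inr ⟨i, j⟩) (Sum.inr ⟨i, j'⟩)
        then x (Sum.inr ⟨i, j⟩) - x (Sum.inr ⟨i, j'⟩) else 0)
      = (if j'.val = j.val + 1 then x (Sum.inr ⟨i, j⟩) - x (Sum.inr ⟨i, j'⟩) else 0)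
        + (if 1 ≤ j.val ∧ j'.val = j.val - 1
            then x (Sum.inr ⟨i, j⟩) - x (Sum.inr ⟨i, j'⟩) else 0) := by
    intro j'
    rw [if_congr (adj_ur_ur i i j j') rfl rfl]
    by_cases h1 : j'.val = j.val + 1
    · rw [if_pos ⟨rfl, Or.inl h1⟩, if_pos h1, if_neg (by omega)]; ring
    · by_cases h2 : 1 ≤ j.val ∧ j'.val = j.val - 1
      · rw [if_pos ⟨rfl, Or.inr (by omega)⟩, if_neg h1, if_pos h2]; ring
      · rw [if_neg, if_neg h1, if_neg h2]
        · ring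
        · rintro ⟨-, (h | h)⟩
          · exact h1 h
          · exact h2 ⟨by omega, by omega⟩
  have hS : (∑ i' : Fin n, ∑ j' : Fin (k i' - 2),
        if (GHinge n k).Adj (Sum.inr ⟨i, j⟩) (Sum.inr ⟨i', j'⟩)
          then x (Sum.inr ⟨i, j⟩) - x (Sum.inr ⟨i', j'⟩) else 0)
      = (if j.val + 1 < k i - 2
          then x (Sum.inr ⟨i, j⟩) - pathVal x i (j.val + 2) else 0)
        + (if 1 ≤ j.val then x (Sum.inr ⟨i, j⟩) - pathVal x i j.val else 0) := by
    rw [Finset.sum_eq_single i]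
    · rw [Finset.sum_congr rfl fun j' _ => split j', Finset.sum_add_distrib]
      congr 1
      · rw [sum_ite_fin (j.val + 1) (fun j' => x (Sum.inr ⟨i, j⟩) - x (Sum.inr ⟨i, j'⟩))]
        split_ifs with h
        · rw [x_eq_pathVal x i (j.val + 1) h, show j.val + 1 + 1 = j.val + 2 by omega]
        · rfl
      · by_cases hj1 : 1 ≤ j.val
        · rw [Finset.sum_congr rfl fun j' _ =>
            if_congr (show (1 ≤ j.val ∧ j'.val = j.val - 1) ↔ j'.val = j.val - 1 by
              simp [hj1]) rfl rfl,
            sum_ite_fin (j.val - 1) (fun j' => x (Sum.inr ⟨i, j⟩) - x (Sum.inr ⟨i, j'⟩)),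
            dif_pos (show j.val - 1 < k i - 2 by omega), if_pos hj1,
            x_eq_pathVal x i (j.val - 1), show j.val - 1 + 1 = j.val by omega]
        · rw [Finset.sum_eq_zero fun j' _ => if_neg (by omega), if_neg hj1]
    · intro i' _ hi'
      apply Finset.sum_eq_zero
      intro j' _
      rw [if_neg]
      rw [adj_ur_ur]
      rintro ⟨rfl, -⟩
      exact hi' rfl
    · intro h; exact absurd (Finset.mem_univ i) h
  rw [hS]
  by_cases hj0 : j.val = 0 <;> by_cases hjl : j.val = k i - 3
  · rw [if_pos hj0, if_pos hjl, if_neg (by omega), if_neg (by omega),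
      show pathVal x i j.val = x (Sum.inl 0) by rw [hj0, pathVal_zero],
      show pathVal x i (j.val + 2) = x (Sum.inl 1) from
        pathVal_last x i (by omega) (by omega)]
    ring
  · rw [if_pos hj0, if_neg hjl, if_pos (show j.val + 1 < k i - 2 by omega), if_neg (by omega),
      show pathVal x i j.val = x (Sum.inl 0) by rw [hj0, pathVal_zero]]
    ring
  · rw [if_neg hj0, if_pos hjl, if_neg (by omega), if_pos (by omega),
      show pathVal x i (j.val + 2) = x (Sum.inl 1) from
        pathVal_last x i (by omega) (by omega)]
    ring
  · rw [if_neg hj0, if_neg hjl, if_pos (show j.val + 1 < k i - 2 by omega), if_pos (by omega)]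
    ring

/-- Part A: explicit solution. -/
lemma partA (hk : ∀ i, 3 ≤ k i) (b : ℕ) (hbdvd : ∀ i, (k i - 1) ∣ b) :
    ∃ x : GHingeVertex n k → ℤ, ∀ v,
      ((GHinge n k).lapMatrix ℤ *ᵥ x) v =
        (if v = Sum.inl 0 then ((b + ∑ i, b / (k i - 1) : ℕ) : ℤ) else 0)
          - (if v = Sum.inl 1 then ((b + ∑ i, b / (k i - 1) : ℕ) : ℤ) else 0) := by
  classical
  set c : Fin n → ℕ := fun i => b / (k i - 1) with hc
  have hcb : ∀ i, (k i - 1) * c i = b := fun i => Nat.mul_div_cancel' (hbdvd i)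
  refine ⟨fun v => match v with
    | Sum.inl a => if a = 0 then (b : ℤ) else 0
    | Sum.inr p => (b : ℤ) - (p.2.val + 1) * c p.1, fun v => ?_⟩
  set x : GHingeVertex n k → ℤ := fun v => match v with
    | Sum.inl a => if a = 0 then (b : ℤ) else 0
    | Sum.inr p => (b : ℤ) - (p.2.val + 1) * c p.1 with hxdef
  have hx0 : x (Sum.inl 0) = (b : ℤ) := by simp [hxdef]
  have hx1 : x (Sum.inl 1) = 0 := by simp [hxdef]
  have hxr : ∀ (i : Fin n) (j : Fin (k i - 2)), x (Sum.inr ⟨i, j⟩)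
      = (b : ℤ) - (j.val + 1) * c i := fun i j => rfl
  have hpv : ∀ (i : Fin n), ∀ t ≤ k i - 1, pathVal x i t = (b : ℤ) - t * c i := by
    intro i t ht
    have hki := hk i
    rcases Nat.eq_zero_or_pos t with h0 | h0
    · subst h0; rw [pathVal_zero, hx0]; simp
    · rcases eq_or_lt_of_le ht with hlast | hmid
      · rw [pathVal_last x i (le_of_eq hlast.symm) h0, hx1]
        have := hcb i
        have hcast : ((k i - 1 : ℕ) : ℤ) * (c i : ℤ) = (b : ℤ) := by exact_mod_cast this
        rw [hlast]
        linarith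
      · rw [pathVal_mid x i h0 hmid, hxr]
        have : ((t - 1 : ℕ) : ℤ) + 1 = (t : ℤ) := by
          have := Nat.sub_add_cancel h0; exact_mod_cast this
        simp only [this]
  rcases v with a | ⟨i, j⟩
  · fin_cases a <;> (try simp only [Fin.zero_eta, Fin.mk_one])
    · rw [lap_u hk x, hx0, hx1]
      have : ∀ i : Fin n, (b : ℤ) - pathVal x i 1 = (c i : ℤ) := by
        intro i
        rw [hpv i 1 (by have := hk i; omega)]
        push_cast; ring
      rw [Finset.sum_congr rfl fun i _ => this i]
      norm_num
    · rw [lap_w hk x, hx0, hx1]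
      have : ∀ i : Fin n, (0 : ℤ) - pathVal x i (k i - 2) = -(c i : ℤ) := by
        intro i
        have hki := hk i
        rw [hpv i (k i - 2) (by omega)]
        have h4 : (k i - 2) * c i + c i = b := by
          rw [← hcb i, show k i - 1 = (k i - 2) + 1 by omega, add_mul, one_mul]
        have h5 : ((k i - 2 : ℕ) : ℤ) * (c i : ℤ) + (c i : ℤ) = (b : ℤ) := by exact_mod_cast h4
        linarith
      rw [Finset.sum_congr rfl fun i _ => this i]
      norm_num
      push_cast
      simp [hc, Int.natCast_div]
      ring
  · rw [lap_v hk x i j, hxr]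
    have hki := hk i
    have hjlt := j.isLt
    rw [hpv i j.val (by omega), hpv i (j.val + 2) (by omega)]
    norm_num
    push_cast
    ring

/-- Part B: any positive `m` with `m·δ` principal is at least `b + ∑ b/(kᵢ-1)`. -/
lemma partB (hn : 2 ≤ n) (hk : ∀ i, 3 ≤ k i) (m : ℕ) (hm : 0 < m)
    (x : GHingeVertex n k → ℤ)
    (hx : ∀ v, ((GHinge n k).lapMatrix ℤ *ᵥ x) v =
      (if v = Sum.inl 0 then (m : ℤ) else 0) - (if v = Sum.inl 1 then (m : ℤ) else 0))
    (b : ℕ) (hb : b = Finset.univ.lcm (fun i => k i - 1)) :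
    b + ∑ i, b / (k i - 1) ≤ m := by
  classical
  have hbdvd : ∀ i, (k i - 1) ∣ b := fun i => hb ▸ Finset.dvd_lcm (Finset.mem_univ i)
  set f : Fin n → ℤ := fun i => pathVal x i 0 - pathVal x i 1 with hf
  have hzero : ∀ (i : Fin n) (j : Fin (k i - 2)),
      ((GHinge n k).lapMatrix ℤ *ᵥ x) (Sum.inr ⟨i, j⟩) = 0 := by
    intro i j; rw [hx]; simp
  have step : ∀ (i : Fin n) (t : ℕ), t + 1 ≤ k i - 1 →
      pathVal x i (t + 1) = pathVal x i t - f i := by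
    intro i t
    induction t with
    | zero =>
      intro _
      show pathVal x i 1 = pathVal x i 0 - (pathVal x i 0 - pathVal x i 1)
      ring
    | succ t ih =>
      intro ht
      have hki := hk i
      have h1 : t < k i - 2 := by omega
      have h2 := lap_v hk x i ⟨t, h1⟩
      rw [hzero i ⟨t, h1⟩, x_eq_pathVal x i t h1] at h2
      have hval : ((⟨t, h1⟩ : Fin (k i - 2)) : ℕ) = t := rfl
      rw [hval] at h2
      have ih' := ih (by omega)
      rw [show t + 1 + 1 = t + 2 by omega]
      linarith [h2, ih']
  have lin : ∀ (i : Fin n) (t : ℕ), t ≤ k i - 1 →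
      pathVal x i t = pathVal x i 0 - t * f i := by
    intro i t
    induction t with
    | zero => intro _; simp
    | succ t ih =>
      intro ht
      rw [step i t (by omega), ih (by omega)]
      push_cast
      ring
  have hteq : ∀ i, x (Sum.inl 0) - x (Sum.inl 1) = ((k i - 1 : ℕ) : ℤ) * f i := by
    intro i
    have hki := hk i
    have hl := lin i (k i - 1) le_rfl
    rw [pathVal_last x i le_rfl (by omega), pathVal_zero] at hl
    linarith [hl]
  have hu := hx (Sum.inl 0)
  rw [lap_u hk x, if_pos rfl, if_neg (by simp), sub_zero] at hu
  have hfu : ∀ i, x (Sum.inl 0) - pathVal x i 1 = f i := by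
    intro i
    rw [hf, ← pathVal_zero x i]
  rw [Finset.sum_congr rfl fun i _ => hfu i] at hu
  -- hu : x u - x w + ∑ f i = m
  set t0 : ℤ := x (Sum.inl 0) - x (Sum.inl 1) with ht0
  have hdvd : (b : ℤ) ∣ t0 := by
    have h2 : ∀ i, (k i - 1) ∣ t0.natAbs := by
      intro i
      have h1 : ((k i - 1 : ℕ) : ℤ) ∣ t0 := ⟨f i, hteq i⟩
      rw [← Int.natAbs_natCast (k i - 1)]
      exact Int.natAbs_dvd_natAbs.mpr h1
    have h3 : b ∣ t0.natAbs := hb ▸ Finset.lcm_dvd (fun i _ => h2 i)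
    exact Int.dvd_natAbs.mp (Int.natCast_dvd_natCast.mpr h3)
  obtain ⟨s, hs⟩ := hdvd
  have hfs : ∀ i, f i = ((b / (k i - 1) : ℕ) : ℤ) * s := by
    intro i
    have hki := hk i
    have hmul : ((k i - 1 : ℕ) : ℤ) * ((b / (k i - 1) : ℕ) : ℤ) = (b : ℤ) := by
      exact_mod_cast congrArg (Nat.cast : ℕ → ℤ) (Nat.mul_div_cancel' (hbdvd i))
    have h4 : ((k i - 1 : ℕ) : ℤ) * f i
        = ((k i - 1 : ℕ) : ℤ) * (((b / (k i - 1) : ℕ) : ℤ) * s) := by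
      rw [← mul_assoc, hmul, ← hs, ← hteq i]
    exact mul_left_cancel₀ (by exact_mod_cast (by omega : (k i - 1) ≠ 0)) h4
  have hmsum : (m : ℤ) = ((b + ∑ i, b / (k i - 1) : ℕ) : ℤ) * s := by
    rw [← hu, hs, Finset.sum_congr rfl fun i _ => hfs i]
    push_cast [Int.natCast_div]
    rw [← Finset.sum_mul]
    ring
  have hM0pos : (0 : ℤ) < ((b + ∑ i, b / (k i - 1) : ℕ) : ℤ) := by
    have hbpos : 0 < b := by
      rw [hb]
      rcases Nat.eq_zero_or_pos (Finset.univ.lcm fun i => k i - 1) with h | h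
      · exfalso
        rw [Finset.lcm_eq_zero_iff] at h
        obtain ⟨i, _, hfi⟩ := h
        have h5 : k i - 1 = 0 := by simpa using hfi
        have := hk i; omega
      · exact h
    have : 0 < b + ∑ i, b / (k i - 1) := by omega
    exact_mod_cast this
  have hs1 : 1 ≤ s := by
    by_contra hcon
    push_neg at hcon
    have hmz : (0 : ℤ) < (m : ℤ) := by exact_mod_cast hm
    nlinarith [hmsum, hM0pos]
  have : ((b + ∑ i, b / (k i - 1) : ℕ) : ℤ) ≤ (m : ℤ) := by
    nlinarith [hmsum, hM0pos]
  exact_mod_cast this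

end aux

open Finset Matrix


/-- For `n ≥ 2` and `k₁, …, kₙ ≥ 3`, with `b = lcm(k₁-1, …, kₙ-1)`, the
class of the divisor `δ` (value `1` at `u`, `-1` at `w`, `0` elsewhere) in the critical
group of `H_{k₁-1,…,kₙ-1}` has additive order exactly `b + ∑ i, b / (k_i - 1)`. -/
theorem gHinge_delta_addOrderOf (n : ℕ) (hn : 2 ≤ n) (k : Fin n → ℕ) (hk : ∀ i, 3 ≤ k i)
    (b : ℕ) (hb : b = Finset.univ.lcm (fun i => k i - 1)) :
    addOrderOf (divisorClass (GHinge n k)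
      (pointDiff (gu n k) (gw n k)) (pointDiff_mem _ _)) =
      b + ∑ i, b / (k i - 1) := by
  classical
  have hbdvd : ∀ i, (k i - 1) ∣ b := fun i => hb ▸ Finset.dvd_lcm (Finset.mem_univ i)
  have hbpos : 0 < b := by
    rw [hb]
    rcases Nat.eq_zero_or_pos (Finset.univ.lcm fun i => k i - 1) with h | h
    · exfalso
      rw [Finset.lcm_eq_zero_iff] at h
      obtain ⟨i, _, hfi⟩ := h
      have h5 : k i - 1 = 0 := by simpa using hfi
      have := hk i; omega
    · exact h
  have hM0pos : 0 < b + ∑ i, b / (k i - 1) := by omega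
  set H := (Prin (GHinge n k)).addSubgroupOf (Div0 (GHingeVertex n k)) with hH
  set a : Div0 (GHingeVertex n k) :=
    ⟨pointDiff (gu n k) (gw n k), pointDiff_mem _ _⟩ with ha
  have hchar : ∀ m : ℕ,
      (m • divisorClass (GHinge n k) (pointDiff (gu n k) (gw n k)) (pointDiff_mem _ _) = 0) ↔
      ∃ x : GHingeVertex n k → ℤ, ∀ v, ((GHinge n k).lapMatrix ℤ *ᵥ x) v =
        (if v = Sum.inl 0 then (m : ℤ) else 0) - (if v = Sum.inl 1 then (m : ℤ) else 0) := by
    intro m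
    have h1 : (m • divisorClass (GHinge n k) (pointDiff (gu n k) (gw n k)) (pointDiff_mem _ _)
          = 0)
        ↔ ((QuotientAddGroup.mk (m • a) : Div0 (GHingeVertex n k) ⧸ H) = 0) := by
      constructor
      · intro h
        have h2 : (m • (QuotientAddGroup.mk a : Div0 (GHingeVertex n k) ⧸ H) = 0) := h
        rwa [← QuotientAddGroup.mk'_apply, ← map_nsmul, QuotientAddGroup.mk'_apply] at h2
      · intro h
        show (m • (QuotientAddGroup.mk a : Div0 (GHingeVertex n k) ⧸ H) = 0)
        rwa [← QuotientAddGroup.mk'_apply, ← map_nsmul, QuotientAddGroup.mk'_apply]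
    rw [h1, QuotientAddGroup.eq_zero_iff, AddSubgroup.mem_addSubgroupOf]
    have h3 : ((m • a : Div0 (GHingeVertex n k)) : GHingeVertex n k → ℤ)
        = m • pointDiff (gu n k) (gw n k) := rfl
    rw [h3]
    simp only [Prin, AddMonoidHom.mem_range, LinearMap.toAddMonoidHom_coe,
      Matrix.mulVecLin_apply]
    have h4 : (m • pointDiff (gu n k) (gw n k))
        = fun v => (if v = Sum.inl 0 then (m : ℤ) else 0)
            - (if v = Sum.inl 1 then (m : ℤ) else 0) := by
      funext v
      simp only [Pi.smul_apply, pointDiff, gu, gw, smul_eq_mul, nsmul_eq_mul, mul_sub,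
        mul_ite, mul_one, mul_zero]
    rw [h4]
    constructor
    · rintro ⟨x, hx⟩
      exact ⟨x, fun v => by rw [hx]⟩
    · rintro ⟨x, hx⟩
      exact ⟨x, funext hx⟩
  rw [addOrderOf_eq_iff hM0pos]
  constructor
  · rw [hchar (b + ∑ i, b / (k i - 1))]
    exact partA hk b hbdvd
  · intro m hmlt hmpos hcon
    rw [hchar m] at hcon
    obtain ⟨x, hx⟩ := hcon
    have := partB hn hk m hmpos x hx b hb
    omega
end

section
/- Let n ≥ 2 and let a_1, …, a_n be positive integers, and let b = lcm(a_1, …, a_n). Fix an index i with 1 ≤ i ≤ n such that a_i divides lcm of the remaining values {a_j : j ≠ i}. Then the greatest common divisor of the integers b/a_j over all j ≠ i equals 1. -/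
/-- Let `n ≥ 2`, let `a₁, …, aₙ` be positive integers, and let
`b = lcm(a₁, …, aₙ)`. Fix an index `i` such that `a_i` divides the lcm of the remaining
values `{a_j : j ≠ i}`. Then the greatest common divisor of the integers `b / a_j`
over all `j ≠ i` equals `1`. -/
theorem gcd_lcm_div_eq_one (n : ℕ) (hn : 2 ≤ n) (a : Fin n → ℕ) (ha : ∀ j, 0 < a j)
    (b : ℕ) (hb : b = Finset.univ.lcm a)
    (i : Fin n) (hi : a i ∣ (Finset.univ.erase i).lcm a) :
    (Finset.univ.erase i).gcd (fun j => b / a j) = 1 := by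
  set S := Finset.univ.erase i with hS
  have hbpos : 0 < b := by
    rw [hb]
    rcases Nat.eq_zero_or_pos (Finset.univ.lcm a) with h0 | hp
    · exfalso
      obtain ⟨j, _, hj⟩ := Finset.lcm_eq_zero_iff.mp h0
      exact (ha j).ne' hj
    · exact hp
  have haj : ∀ j, a j ∣ b := fun j => hb ▸ Finset.dvd_lcm (Finset.mem_univ j)
  have hSne : S.Nonempty := by
    have : 1 < Fintype.card (Fin n) := by simp only [Fintype.card_fin]; omega
    obtain ⟨j, hj⟩ := Fintype.exists_ne_of_one_lt_card this i
    exact ⟨j, Finset.mem_erase.mpr ⟨hj, Finset.mem_univ j⟩⟩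
  set g := S.gcd (fun j => b / a j) with hg
  obtain ⟨j0, hj0⟩ := hSne
  have hgdvdb : g ∣ b := (Finset.gcd_dvd hj0).trans (Nat.div_dvd_of_dvd (haj j0))
  have herase : ∀ j ∈ S, a j ∣ b / g := by
    intro j hj
    have h1 : g ∣ b / a j := Finset.gcd_dvd hj
    have h2 : a j * g ∣ b := by
      obtain ⟨c, hc⟩ := h1
      exact ⟨c, by rw [mul_assoc, ← hc, Nat.mul_div_cancel' (haj j)]⟩
    exact (Nat.dvd_div_iff_mul_dvd hgdvdb).mpr (by rwa [mul_comm] at h2)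
  have hkey : ∀ j, a j ∣ b / g := by
    intro j
    rcases eq_or_ne j i with rfl | hne
    · exact hi.trans (Finset.lcm_dvd herase)
    · exact herase j (Finset.mem_erase.mpr ⟨hne, Finset.mem_univ j⟩)
  have hbdvd : b ∣ b / g := by
    rw [hb]
    exact Finset.lcm_dvd fun j _ => hb ▸ hkey j
  have heq : b / g = b := Nat.dvd_antisymm (Nat.div_dvd_of_dvd hgdvdb) hbdvd
  rcases (Nat.div_eq_self.mp heq) with h0 | h1
  · exact absurd h0 hbpos.ne'
  · exact h1
end

section
/- Let n ≥ 1 and let a_1, …, a_n be positive integers. Then lcm(a_1, …, a_n) multiplied by the greatest common divisor of the n products ∏_{j≠i} a_j (taken over all indices 1 ≤ i ≤ n) equals the full product ∏_{i=1}^n a_i. -/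
lemma fact_finset_lcm {ι : Type*} (s : Finset ι) (f : ι → ℕ) (hf : ∀ i ∈ s, f i ≠ 0) (p : ℕ) :
    (s.lcm f).factorization p = s.sup fun i => (f i).factorization p := by
  classical
  induction s using Finset.induction with
  | empty => simp
  | @insert i s hi ih =>
    have h1 : f i ≠ 0 := hf i (Finset.mem_insert_self _ _)
    have h2 : s.lcm f ≠ 0 := by
      rw [Ne, Finset.lcm_eq_zero_iff]
      rintro ⟨j, hj, hj0⟩
      exact hf j (Finset.mem_insert_of_mem hj) hj0
    rw [Finset.lcm_insert, Finset.sup_insert, ← ih fun j hj => hf j (Finset.mem_insert_of_mem hj)]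
    show (Nat.lcm (f i) (s.lcm f)).factorization p = _
    rw [Nat.factorization_lcm h1 h2]
    simp [Finsupp.sup_apply]

lemma fact_finset_gcd {ι : Type*} (s : Finset ι) (hs : s.Nonempty) (f : ι → ℕ)
    (hf : ∀ i ∈ s, f i ≠ 0) (p : ℕ) :
    (s.gcd f).factorization p = s.inf' hs fun i => (f i).factorization p := by
  classical
  induction hs using Finset.Nonempty.cons_induction with
  | singleton i => simp
  | cons i s hi hs ih =>
    have h1 : f i ≠ 0 := hf i (Finset.mem_cons_self _ _)
    have h2 : s.gcd f ≠ 0 := by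
      rw [Ne, Finset.gcd_eq_zero_iff]
      push_neg
      obtain ⟨j, hj⟩ := hs
      exact ⟨j, hj, hf j (Finset.mem_cons_of_mem hj)⟩
    have hg : (Finset.cons i s hi).gcd f = GCDMonoid.gcd (f i) (s.gcd f) := by
      rw [Finset.cons_eq_insert, Finset.gcd_insert]
    rw [hg, Finset.inf'_cons (H := hs), ← ih fun j hj => hf j (Finset.mem_cons_of_mem hj)]
    show (Nat.gcd (f i) (s.gcd f)).factorization p = _
    rw [Nat.factorization_gcd h1 h2]
    simp [Finsupp.inf_apply]

/-- Let `n ≥ 1` and let `a₁, …, aₙ` be positive integers. Then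
`lcm(a₁, …, aₙ)` multiplied by the gcd of the `n` products `∏_{j ≠ i} a_j` equals the
full product `∏ i, a_i`. -/
theorem lcm_mul_gcd_of_complementary_products (n : ℕ) (hn : 1 ≤ n) (a : Fin n → ℕ)
    (ha : ∀ i, 0 < a i) :
    Finset.univ.lcm a *
        Finset.univ.gcd (fun i => ∏ j ∈ Finset.univ.erase i, a j) =
      ∏ i, a i := by
  have : Nonempty (Fin n) := ⟨⟨0, hn⟩⟩
  have hne : (Finset.univ : Finset (Fin n)).Nonempty := Finset.univ_nonempty
  have hP : ∀ i : Fin n, (∏ j ∈ Finset.univ.erase i, a j) ≠ 0 :=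
    fun i => (Finset.prod_pos fun j _ => ha j).ne'
  have hL : Finset.univ.lcm a ≠ 0 := by
    rw [Ne, Finset.lcm_eq_zero_iff]
    rintro ⟨j, hj, hj0⟩
    exact (ha j).ne' hj0
  have hG : Finset.univ.gcd (fun i => ∏ j ∈ Finset.univ.erase i, a j) ≠ 0 := by
    rw [Ne, Finset.gcd_eq_zero_iff]
    push_neg
    obtain ⟨j, hj⟩ := hne
    exact ⟨j, hj, hP j⟩
  apply Nat.eq_of_factorization_eq (mul_ne_zero hL hG) (Finset.prod_pos fun i _ => ha i).ne'
  intro p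
  rw [Nat.factorization_mul hL hG, Nat.factorization_prod (fun i _ => (ha i).ne')]
  rw [Finsupp.add_apply]
  rw [fact_finset_lcm _ _ (fun i _ => (ha i).ne') p,
    fact_finset_gcd _ hne _ (fun i _ => hP i) p]
  set v : Fin n → ℕ := fun i => (a i).factorization p with hv
  have hsum : (∑ i, (a i).factorization) p = ∑ i, v i := by
    simp [Finsupp.finset_sum_apply, hv]
  rw [hsum]
  have herase : ∀ i : Fin n, (∏ j ∈ Finset.univ.erase i, a j).factorization p
      = (∑ j, v j) - v i := by
    intro i
    rw [Nat.factorization_prod (fun j _ => (ha j).ne'), Finsupp.finset_sum_apply]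
    have h1 := Finset.add_sum_erase Finset.univ v (Finset.mem_univ i)
    have h2 : ∑ j ∈ Finset.univ.erase i, (a j).factorization p
        = ∑ j ∈ Finset.univ.erase i, v j := rfl
    rw [h2]
    omega
  simp only [herase]
  obtain ⟨i₀, _, hi₀⟩ := Finset.exists_mem_eq_sup' hne v
  have hle : ∀ i : Fin n, v i ≤ ∑ j, v j :=
    fun i => Finset.single_le_sum (fun j _ => Nat.zero_le _) (Finset.mem_univ i)
  have hsup : Finset.univ.sup v = v i₀ := by
    rw [← Finset.sup'_eq_sup hne, hi₀]
  have hinf : (Finset.univ.inf' hne fun i => (∑ j, v j) - v i) = (∑ j, v j) - v i₀ := by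
    apply le_antisymm
    · exact Finset.inf'_le _ (Finset.mem_univ i₀)
    · apply Finset.le_inf'
      intro j _
      have : v j ≤ v i₀ := by rw [← hi₀]; exact Finset.le_sup' v (Finset.mem_univ j)
      omega
  rw [hsup, hinf]
  have := hle i₀
  omega
end

section
/- Let G be a finite connected simple graph with vertex set V and Laplacian matrix L, let D : V → ℤ be a divisor of degree zero, let n be a positive integer, and let r : V → ℤ be an integer vector with L·r = n·D. If for every integer t the greatest common divisor of the integers {r(v) + t : v ∈ V} equals 1, then the class of D in the critical group K(G) has additive order exactly n. -/

private lemma lap_ker_const {V : Type*} [Fintype V] [DecidableEq V]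
    (G : SimpleGraph V) [DecidableRel G.Adj] (hG : G.Connected)
    (y : V → ℤ) (hy : (G.lapMatrix ℤ).mulVec y = 0) (v w : V) : y v = y w := by
  have h : Matrix.toLin' (G.lapMatrix ℝ) (fun v => (y v : ℝ)) = 0 := by
    rw [Matrix.toLin'_apply]
    funext u
    have := congrFun hy u
    rw [SimpleGraph.lapMatrix_mulVec_apply] at this ⊢
    rw [Pi.zero_apply] at this ⊢
    exact_mod_cast congrArg (fun z : ℤ => (z : ℝ)) this
  rw [Matrix.toLin'_apply, SimpleGraph.lapMatrix_mulVec_eq_zero_iff_forall_reachable] at h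
  exact_mod_cast h v w (hG.preconnected v w)

private lemma arith_key {V : Type*} [Fintype V] [Nonempty V] (r : V → ℤ)
    (hgcd : ∀ t : ℤ, Finset.univ.gcd (fun v => r v + t) = 1)
    (M N c : ℤ) (hN : 0 < N) (h : ∀ v, N ∣ M * r v - c) : N ∣ M := by
  set g : ℤ := (Int.gcd M N : ℤ) with hgdef
  have hgnat : 0 < Int.gcd M N := by
    have : Int.gcd M N ≠ 0 := fun h0 => by
      have := Int.gcd_eq_zero_iff.mp h0
      omega
    exact Nat.pos_of_ne_zero this
  have hgpos : 0 < g := by rw [hgdef]; exact_mod_cast hgnat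
  have hgM : g ∣ M := Int.gcd_dvd_left M N
  have hgN : g ∣ N := Int.gcd_dvd_right M N
  obtain ⟨v0⟩ := (inferInstance : Nonempty V)
  have hgc : g ∣ c := by
    have h1 : g ∣ M * r v0 - c := dvd_trans hgN (h v0)
    have h2 : g ∣ M * r v0 := Dvd.dvd.mul_right hgM _
    have := dvd_sub h2 h1
    simpa using this
  obtain ⟨M', hM'⟩ := hgM
  obtain ⟨N', hN'⟩ := hgN
  obtain ⟨c', hc'⟩ := hgc
  have hdvd : ∀ v, N' ∣ M' * r v - c' := by
    intro v
    have := h v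
    rw [hM', hN', hc'] at this
    have : g * N' ∣ g * (M' * r v - c') := by
      convert this using 1; ring
    exact (mul_dvd_mul_iff_left (by positivity : g ≠ 0)).mp this
  have hcop : Int.gcd M' N' = 1 := by
    have hM'eq : M' = M / g := by
      rw [hM', Int.mul_ediv_cancel_left _ (by positivity : g ≠ 0)]
    have hN'eq : N' = N / g := by
      rw [hN', Int.mul_ediv_cancel_left _ (by positivity : g ≠ 0)]
    rw [hM'eq, hN'eq, hgdef]
    exact Int.gcd_div_gcd_div_gcd hgnat
  -- Bezout
  set a := Int.gcdA M' N'
  set b := Int.gcdB M' N'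
  have hbez : 1 = M' * a + N' * b := by
    have := Int.gcd_eq_gcd_ab M' N'
    rw [hcop] at this
    exact_mod_cast this
  have hdvd2 : ∀ v, N' ∣ r v + (-(a * c')) := by
    intro v
    have : r v + (-(a * c')) = a * (M' * r v - c') + N' * (b * r v) := by
      linear_combination r v * hbez
    rw [this]
    exact dvd_add (Dvd.dvd.mul_left (hdvd v) a) (Dvd.dvd.mul_right dvd_rfl _)
  have hN'dvd1 : N' ∣ 1 := by
    rw [← hgcd (-(a * c'))]
    exact Finset.dvd_gcd fun v _ => hdvd2 v
  have : N' = 1 := by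
    rcases Int.isUnit_iff.mp (isUnit_of_dvd_one hN'dvd1) with h1 | h1
    · exact h1
    · exfalso; rw [h1] at hN'; nlinarith
  rw [hN', this, mul_one]
  exact Int.gcd_dvd_left M N


/-- Let `G` be a finite connected simple graph with Laplacian `L`, let `D`
be a degree-zero divisor, let `n > 0`, and let `r` be an integer vector with `L·r = n·D`.
If for every integer `t` the gcd of the integers `{r v + t : v ∈ V}` equals `1`, then the
class of `D` in the critical group `K(G)` has additive order exactly `n`. -/
theorem addOrderOf_divisorClass_of_gcd_eq_one {V : Type*} [Fintype V] [DecidableEq V]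
    (G : SimpleGraph V) [DecidableRel G.Adj] (hG : G.Connected)
    (D : V → ℤ) (hD : D ∈ Div0 V) (n : ℕ) (hn : 0 < n) (r : V → ℤ)
    (hr : (G.lapMatrix ℤ).mulVec r = (n : ℤ) • D)
    (hgcd : ∀ t : ℤ, Finset.univ.gcd (fun v => r v + t) = 1) :
    addOrderOf (divisorClass G D hD) = n := by
  have : Nonempty V := hG.nonempty
  have hmk : ∀ m : ℕ, m • divisorClass G D hD = 0 ↔
      ∃ x : V → ℤ, (G.lapMatrix ℤ).mulVec x = (m : ℤ) • D := by
    intro m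
    have : m • divisorClass G D hD =
        QuotientAddGroup.mk (m • (⟨D, hD⟩ : Div0 V)) := by
      rw [divisorClass, QuotientAddGroup.mk_nsmul]; rfl
    rw [this]; show (QuotientAddGroup.mk (m • (⟨D, hD⟩ : Div0 V)) : Div0 V ⧸ ((Prin G).addSubgroupOf (Div0 V))) = 0 ↔ _; rw [QuotientAddGroup.eq_zero_iff, AddSubgroup.mem_addSubgroupOf]
    constructor
    · rintro ⟨x, hx⟩
      exact ⟨x, by simpa [Matrix.mulVecLin_apply, natCast_zsmul] using hx⟩
    · rintro ⟨x, hx⟩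
      exact ⟨x, by simpa [Matrix.mulVecLin_apply, natCast_zsmul] using hx⟩
  have hzero : n • divisorClass G D hD = 0 := (hmk n).mpr ⟨r, hr⟩
  have hdvdn : addOrderOf (divisorClass G D hD) ∣ n :=
    addOrderOf_dvd_of_nsmul_eq_zero hzero
  have hndvd : ∀ m : ℕ, m • divisorClass G D hD = 0 → n ∣ m := by
    intro m hm
    obtain ⟨x, hx⟩ := (hmk m).mp hm
    -- L (m•r - n•x) = 0
    set y : V → ℤ := (m : ℤ) • r - (n : ℤ) • x with hy
    have hker : (G.lapMatrix ℤ).mulVec y = 0 := by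
      rw [hy, Matrix.mulVec_sub, Matrix.mulVec_smul, Matrix.mulVec_smul, hr, hx,
        smul_smul, smul_smul, mul_comm, sub_self]
    obtain ⟨v0⟩ := (inferInstance : Nonempty V)
    have hconst : ∀ v, (m : ℤ) * r v - (n : ℤ) * x v = y v0 := by
      intro v
      have := lap_ker_const G hG y hker v v0
      simpa [hy, smul_eq_mul] using this
    have : (n : ℤ) ∣ (m : ℤ) := by
      apply arith_key r hgcd (m : ℤ) (n : ℤ) (y v0) (by exact_mod_cast hn)
      intro v
      have := hconst v
      exact ⟨x v, by linarith⟩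
    exact_mod_cast this
  have h2 : n ∣ addOrderOf (divisorClass G D hD) :=
    hndvd _ (addOrderOf_nsmul_eq_zero _)
  exact Nat.dvd_antisymm hdvdn h2
end
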